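/- arXiv:1905.06254 — 11 statements merged into one kernel-verified Lean document; each statement's English description precedes it below -/
import Mathlib

section
/- Let H, K, M be Hilbert spaces and K : H → K, M : H → M contractions. Then M*M ≤ K*K if and only if there exists an effect Q on K (i.e., 0 ≤ Q ≤ I) such that M*M = K*QK and ker K* ⊆ ker Q; moreover, in this case Q is unique and Q = C*C where C is the unique contraction with M = CK vanishing on ker K*. -/
open ContinuousLinearMap

noncomputable section Aux

variable {H K₀ M₀ : Type*}
    [NormedAddCommGroup H] [InnerProductSpace ℂ H] [CompleteSpace H]
    [NormedAddCommGroup K₀] [InnerProductSpace ℂ K₀] [CompleteSpace K₀]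
    [NormedAddCommGroup M₀] [InnerProductSpace ℂ M₀] [CompleteSpace M₀]

local notation "⟪" x ", " y "⟫" => @inner ℂ _ _ x y

/-- uniqueness -/
theorem uniq_aux (K : H →L[ℂ] K₀) (Q₁ Q₂ : K₀ →L[ℂ] K₀)
    (h₁ : IsSelfAdjoint Q₁) (h₂ : IsSelfAdjoint Q₂)
    (hQK : ((adjoint K).comp Q₁).comp K = ((adjoint K).comp Q₂).comp K)
    (hk₁ : ∀ x, adjoint K x = 0 → Q₁ x = 0)
    (hk₂ : ∀ x, adjoint K x = 0 → Q₂ x = 0) : Q₁ = Q₂ := by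
  -- step 1 : agreement on the range of K
  have step1 : ∀ y : H, Q₁ (K y) = Q₂ (K y) := by
    intro y
    set d : K₀ := Q₁ (K y) - Q₂ (K y) with hd
    have hKd : adjoint K d = 0 := by
      have := congrArg (fun T : H →L[ℂ] H => T y) hQK
      simp only [comp_apply] at this
      simp [hd, map_sub, this]
    have hQ₁d : Q₁ d = 0 := hk₁ d hKd
    have hQ₂d : Q₂ d = 0 := hk₂ d hKd
    have hdd : ⟪d, d⟫ = 0 := by
      have e1 : ⟪Q₁ (K y), d⟫ = ⟪K y, Q₁ d⟫ := h₁.isSymmetric _ _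
      have e2 : ⟪Q₂ (K y), d⟫ = ⟪K y, Q₂ d⟫ := h₂.isSymmetric _ _
      rw [hd]
      rw [inner_sub_left, e1, e2, hQ₁d, hQ₂d]
      simp
    have : d = 0 := inner_self_eq_zero.mp hdd
    exact sub_eq_zero.mp this
  -- step 2 : the whole space
  set S : Submodule ℂ K₀ := LinearMap.range (K : H →ₗ[ℂ] K₀) with hS
  set Sc : Submodule ℂ K₀ := S.topologicalClosure with hSc
  haveI : CompleteSpace Sc := (Submodule.isClosed_topologicalClosure S).completeSpace_coe
  have hclosure : ∀ a ∈ Sc, Q₁ a = Q₂ a := by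
    intro a ha
    have heq : Set.EqOn Q₁ Q₂ (S : Set K₀) := by
      rintro _ ⟨y, rfl⟩
      exact step1 y
    have := heq.closure Q₁.continuous Q₂.continuous
    refine this ?_
    rw [← Submodule.topologicalClosure_coe]
    exact ha
  have hperp : ∀ b ∈ Scᗮ, adjoint K b = 0 := by
    intro b hb
    have h1 : ∀ y : H, ⟪adjoint K b, y⟫ = 0 := by
      intro y
      rw [adjoint_inner_left]
      have hKy : K y ∈ Sc := S.le_topologicalClosure ⟨y, rfl⟩
      have := (Submodule.mem_orthogonal Sc b).mp hb (K y) hKy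
      -- this : ⟪K y, b⟫ = 0
      rw [← inner_conj_symm]
      simp [this]
    have := h1 (adjoint K b)
    exact inner_self_eq_zero.mp this
  ext w
  obtain ⟨a, ha, b, hb, rfl⟩ := Sc.exists_add_mem_mem_orthogonal w
  rw [map_add, map_add, hclosure a ha, hk₁ b (hperp b hb), hk₂ b (hperp b hb)]


/-- construction of the contraction C -/
theorem exists_factor (K : H →L[ℂ] K₀) (M : H →L[ℂ] M₀)
    (h : ∀ x, ‖M x‖ ≤ ‖K x‖) :
    ∃ C : K₀ →L[ℂ] M₀, ‖C‖ ≤ 1 ∧ M = C.comp K ∧ ∀ x, adjoint K x = 0 → C x = 0 := by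
  classical
  have hker : LinearMap.ker (K : H →ₗ[ℂ] K₀) ≤ LinearMap.ker (M : H →ₗ[ℂ] M₀) := by
    intro x hx
    have hx' : K x = 0 := hx
    have hh := h x
    rw [hx'] at hh
    simp only [norm_zero] at hh
    exact norm_le_zero_iff.mp hh
  set S : Submodule ℂ K₀ := LinearMap.range (K : H →ₗ[ℂ] K₀) with hSdef
  set L₀ : (H ⧸ LinearMap.ker (K : H →ₗ[ℂ] K₀)) →ₗ[ℂ] M₀ :=
    (LinearMap.ker (K : H →ₗ[ℂ] K₀)).liftQ (M : H →ₗ[ℂ] M₀) hker with hL₀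
  set Ll : ↥S →ₗ[ℂ] M₀ :=
    L₀ ∘ₗ (LinearMap.quotKerEquivRange (K : H →ₗ[ℂ] K₀)).symm.toLinearMap with hLl
  have key : ∀ (x : H) (hx : (K : H →ₗ[ℂ] K₀) x ∈ S),
      Ll ⟨(K : H →ₗ[ℂ] K₀) x, hx⟩ = M x := by
    intro x hx
    simp only [hLl, LinearMap.comp_apply, LinearEquiv.coe_toLinearMap]
    rw [LinearMap.quotKerEquivRange_symm_apply_image]
    rfl
  have bound : ∀ s : ↥S, ‖Ll s‖ ≤ 1 * ‖s‖ := by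
    rintro ⟨s, x, rfl⟩
    rw [key x ⟨x, rfl⟩, one_mul]
    exact (h x).trans (le_of_eq rfl)
  set Lc : ↥S →L[ℂ] M₀ := Ll.mkContinuous 1 bound with hLc
  set Sc : Submodule ℂ K₀ := S.topologicalClosure with hScdef
  haveI : CompleteSpace Sc := (Submodule.isClosed_topologicalClosure S).completeSpace_coe
  set ei : ↥S →ₗᵢ[ℂ] ↥Sc :=
    ⟨Submodule.inclusion S.le_topologicalClosure, fun x => rfl⟩ with hei
  set e : ↥S →L[ℂ] ↥Sc := ei.toContinuousLinearMap with he
  have hdense : DenseRange e := by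
    intro z
    have hz : (z : K₀) ∈ closure (S : Set K₀) := by
      rw [← Submodule.topologicalClosure_coe]
      exact z.2
    rw [mem_closure_iff_seq_limit] at hz
    obtain ⟨u, hu, hlim⟩ := hz
    have ht : Filter.Tendsto (fun n => e ⟨u n, hu n⟩) Filter.atTop (nhds z) := by
      rw [tendsto_subtype_rng]
      exact hlim
    exact mem_closure_of_tendsto ht
      (Filter.Eventually.of_forall fun n => ⟨⟨u n, hu n⟩, rfl⟩)
  have hbnd : ∀ x : ↥S, ‖x‖ ≤ (1 : NNReal) * ‖e x‖ := by
    intro x; simp [he]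
  set Cext : ↥Sc →L[ℂ] M₀ :=
    Lc.extend e with hCext
  have hCextnorm : ‖Cext‖ ≤ 1 := by
    have h1 := Lc.opNorm_extend_le hdense hbnd
    have hLcn : ‖Lc‖ ≤ 1 := Ll.mkContinuous_norm_le zero_le_one bound
    calc ‖Cext‖ ≤ (1 : NNReal) * ‖Lc‖ := h1
    _ ≤ 1 := by rw [NNReal.coe_one, one_mul]; exact hLcn
  set C : K₀ →L[ℂ] M₀ := Cext.comp Sc.orthogonalProjectionOnto with hC
  refine ⟨C, ?_, ?_, ?_⟩
  · calc ‖C‖ ≤ ‖Cext‖ * ‖(Sc.orthogonalProjectionOnto : K₀ →L[ℂ] Sc)‖ := opNorm_comp_le _ _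
    _ ≤ 1 * 1 := mul_le_mul hCextnorm (Submodule.orthogonalProjectionOnto_norm_le _)
        (ContinuousLinearMap.opNorm_nonneg _) zero_le_one
    _ = 1 := one_mul 1
  · ext x
    symm
    have hmemS : K x ∈ S := ⟨x, rfl⟩
    have hmem : K x ∈ Sc := S.le_topologicalClosure hmemS
    have hproj : Sc.orthogonalProjectionOnto (K x) = ⟨K x, hmem⟩ :=
      Submodule.orthogonalProjectionOnto_mem_subspace_eq_self (⟨K x, hmem⟩ : Sc)
    have heS : e ⟨K x, hmemS⟩ = ⟨K x, hmem⟩ := rfl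
    simp only [comp_apply, hC]
    rw [hproj, ← heS, hCext, ContinuousLinearMap.extend_eq (h_dense := hdense)
      (h_e := (isUniformEmbedding_of_bound _ hbnd).isUniformInducing)]
    exact key x hmemS
  · intro x hx
    have hxperp : x ∈ Scᗮ := by
      rw [Submodule.mem_orthogonal]
      intro u hu
      have hclosed : IsClosed {u : K₀ | ⟪u, x⟫ = 0} :=
        isClosed_eq (continuous_id.inner continuous_const) continuous_const
      have hsub : (S : Set K₀) ⊆ {u : K₀ | ⟪u, x⟫ = 0} := by
        rintro _ ⟨y, rfl⟩
        show ⟪K y, x⟫ = 0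
        rw [← inner_conj_symm, ← adjoint_inner_left, hx]
        simp
      have hc2 : (Sc : Set K₀) ⊆ {u : K₀ | ⟪u, x⟫ = 0} := by
        rw [hScdef, Submodule.topologicalClosure_coe]
        exact hclosed.closure_subset_iff.mpr hsub
      exact hc2 hu
    have hp0 : Sc.orthogonalProjectionOnto x = 0 :=
      Submodule.orthogonalProjectionOnto_apply_of_mem_orthogonal hxperp
    simp [hC, comp_apply, hp0]

end Aux

/-- `M*M ≤ K*K` iff there is a (unique) effect `Q` on `K₀` with
`M*M = K* Q K` and `ker K* ⊆ ker Q`; moreover `Q = C*C` for the unique contraction `C` with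
`M = C K` vanishing on `ker K*`. -/
theorem stmt_2 {H K₀ M₀ : Type*}
    [NormedAddCommGroup H] [InnerProductSpace ℂ H] [CompleteSpace H]
    [NormedAddCommGroup K₀] [InnerProductSpace ℂ K₀] [CompleteSpace K₀]
    [NormedAddCommGroup M₀] [InnerProductSpace ℂ M₀] [CompleteSpace M₀]
    (K : H →L[ℂ] K₀) (M : H →L[ℂ] M₀) (hK : ‖K‖ ≤ 1) (hM : ‖M‖ ≤ 1) :
    (((adjoint K).comp K - (adjoint M).comp M).IsPositive ↔
      ∃! Q : K₀ →L[ℂ] K₀, Q.IsPositive ∧ (1 - Q).IsPositive ∧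
        (adjoint M).comp M = ((adjoint K).comp Q).comp K ∧
        ∀ x : K₀, adjoint K x = 0 → Q x = 0) ∧
    ∀ (Q : K₀ →L[ℂ] K₀) (C : K₀ →L[ℂ] M₀),
      (Q.IsPositive ∧ (1 - Q).IsPositive ∧
        (adjoint M).comp M = ((adjoint K).comp Q).comp K ∧
        (∀ x : K₀, adjoint K x = 0 → Q x = 0)) →
      (‖C‖ ≤ 1 ∧ M = C.comp K ∧ (∀ x : K₀, adjoint K x = 0 → C x = 0)) →
      Q = (adjoint C).comp C := by
  -- generic facts about `C† C` for any contraction `C`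
  have genSA : ∀ C : K₀ →L[ℂ] M₀, IsSelfAdjoint ((adjoint C).comp C) := by
    intro C
    rw [ContinuousLinearMap.isSelfAdjoint_iff', adjoint_comp, adjoint_adjoint]
  have genPos : ∀ C : K₀ →L[ℂ] M₀, ((adjoint C).comp C).IsPositive := by
    intro C
    refine ⟨(genSA C).isSymmetric, fun x => ?_⟩
    show 0 ≤ RCLike.re (inner ℂ (((adjoint C).comp C) x) x)
    rw [comp_apply, adjoint_inner_left]
    exact inner_self_nonneg
  have gen1Q : ∀ C : K₀ →L[ℂ] M₀, ‖C‖ ≤ 1 → (1 - (adjoint C).comp C).IsPositive := by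
    intro C hCn
    refine ⟨(IsSelfAdjoint.one (K₀ →L[ℂ] K₀)).sub (genSA C) |>.isSymmetric, fun x => ?_⟩
    show 0 ≤ RCLike.re (inner ℂ ((1 - (adjoint C).comp C) x) x)
    rw [sub_apply, ContinuousLinearMap.one_apply, inner_sub_left, map_sub, comp_apply, adjoint_inner_left,
      inner_self_eq_norm_sq, inner_self_eq_norm_sq]
    have hCx : ‖C x‖ ≤ ‖x‖ := by
      calc ‖C x‖ ≤ ‖C‖ * ‖x‖ := C.le_opNorm x
      _ ≤ 1 * ‖x‖ := mul_le_mul_of_nonneg_right hCn (norm_nonneg x)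
      _ = ‖x‖ := one_mul _
    nlinarith [norm_nonneg (C x)]
  have genEq : ∀ C : K₀ →L[ℂ] M₀, M = C.comp K →
      (adjoint M).comp M = ((adjoint K).comp ((adjoint C).comp C)).comp K := by
    intro C hCeq
    rw [hCeq, adjoint_comp]
    ext x
    simp [comp_apply]
  have genKer : ∀ C : K₀ →L[ℂ] M₀, (∀ x, adjoint K x = 0 → C x = 0) →
      ∀ x : K₀, adjoint K x = 0 → ((adjoint C).comp C) x = 0 := by
    intro C hCk x hx
    rw [comp_apply, hCk x hx, map_zero]
  constructor
  · constructor
    · intro h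
      have hnorm : ∀ x, ‖M x‖ ≤ ‖K x‖ := by
        intro x
        have h2 := h.2 x
        have hre : (((adjoint K).comp K - (adjoint M).comp M).reApplyInnerSelf x)
            = ‖K x‖ ^ 2 - ‖M x‖ ^ 2 := by
          show RCLike.re (inner ℂ (((adjoint K).comp K - (adjoint M).comp M) x) x) = _
          rw [sub_apply, inner_sub_left, map_sub, comp_apply, comp_apply,
            adjoint_inner_left, adjoint_inner_left, inner_self_eq_norm_sq,
            inner_self_eq_norm_sq]
        rw [hre] at h2
        nlinarith [norm_nonneg (M x), norm_nonneg (K x)]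
      obtain ⟨C, hC1, hC2, hC3⟩ := exists_factor K M hnorm
      refine ⟨(adjoint C).comp C,
        ⟨genPos C, gen1Q C hC1, genEq C hC2, genKer C hC3⟩, ?_⟩
      intro Q' hQ'
      exact uniq_aux K Q' ((adjoint C).comp C) hQ'.1.isSelfAdjoint (genSA C)
        (hQ'.2.2.1.symm.trans (genEq C hC2)) hQ'.2.2.2 (genKer C hC3)
    · rintro ⟨Q, ⟨hQpos, h1Q, hEq, hker⟩, -⟩
      have hrw : (adjoint K).comp K - (adjoint M).comp M
          = (adjoint K) ∘L ((1 - Q) ∘L K) := by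
        rw [hEq]
        ext x
        simp [comp_apply, sub_apply, map_sub]
      rw [hrw]
      exact h1Q.adjoint_conj K
  · intro Q C hQ hC
    obtain ⟨hQp, hQ1, hQeq, hQk⟩ := hQ
    obtain ⟨hCn, hCeq, hCk⟩ := hC
    exact uniq_aux K Q ((adjoint C).comp C) hQp.isSelfAdjoint (genSA C)
      (hQeq.symm.trans (genEq C hCeq)) hQk (genKer C hCk)
end

section
/- Let K : H → K and M : H → M be bounded operators between Hilbert spaces. Then there exists λ ≥ 0 with M*M ≤ λ K*K if and only if ran M* ⊆ ran K*. -/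
open ContinuousLinearMap

section Aux

variable {H K₀ M₀ : Type*}
    [NormedAddCommGroup H] [InnerProductSpace ℂ H] [CompleteSpace H]
    [NormedAddCommGroup K₀] [InnerProductSpace ℂ K₀] [CompleteSpace K₀]
    [NormedAddCommGroup M₀] [InnerProductSpace ℂ M₀] [CompleteSpace M₀]

local notation "⟪" x ", " y "⟫" => @inner ℂ _ _ x y

/-- The positivity hypothesis gives the pointwise norm inequality. -/
lemma key_ineq (K : H →L[ℂ] K₀) (M : H →L[ℂ] M₀) {lam : ℝ}
    (hpos : (lam • (adjoint K).comp K - (adjoint M).comp M).IsPositive) (x : H) :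
    ‖M x‖ ^ 2 ≤ lam * ‖K x‖ ^ 2 := by
  have h := hpos.2 x
  rw [reApplyInnerSelf] at h
  have hK : ‖K x‖ ^ 2 = Complex.re ⟪((adjoint K).comp K) x, x⟫ :=
    apply_norm_sq_eq_inner_adjoint_left K x
  have hM : ‖M x‖ ^ 2 = Complex.re ⟪((adjoint M).comp M) x, x⟫ :=
    apply_norm_sq_eq_inner_adjoint_left M x
  have hexp : Complex.re ⟪(lam • (adjoint K).comp K - (adjoint M).comp M) x, x⟫
      = lam * Complex.re ⟪((adjoint K).comp K) x, x⟫
        - Complex.re ⟪((adjoint M).comp M) x, x⟫ := by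
    rw [ContinuousLinearMap.sub_apply, ContinuousLinearMap.smul_apply,
      RCLike.real_smul_eq_coe_smul (K := ℂ), inner_sub_left, inner_smul_left]
    simp [Complex.sub_re, Complex.mul_re]
  have h' : 0 ≤ Complex.re ⟪(lam • (adjoint K).comp K - (adjoint M).comp M) x, x⟫ := h
  rw [hexp] at h'
  rw [hK, hM]
  linarith

lemma forward_dir (K : H →L[ℂ] K₀) (M : H →L[ℂ] M₀) {lam : ℝ} (hlam : 0 ≤ lam)
    (hpos : (lam • (adjoint K).comp K - (adjoint M).comp M).IsPositive) :
    Set.range (adjoint M) ⊆ Set.range (adjoint K) := by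
  rintro _ ⟨y, rfl⟩
  -- norm inequality
  have hineq : ∀ x : H, ‖M x‖ ≤ Real.sqrt lam * ‖K x‖ := by
    intro x
    have h := key_ineq K M hpos x
    have h2 : ‖M x‖ ^ 2 ≤ (Real.sqrt lam * ‖K x‖) ^ 2 := by
      rw [mul_pow, Real.sq_sqrt hlam]; exact h
    have hnn : (0:ℝ) ≤ Real.sqrt lam * ‖K x‖ :=
      mul_nonneg (Real.sqrt_nonneg _) (norm_nonneg _)
    nlinarith [norm_nonneg (M x)]
  -- the functional ψ x = ⟪y, M x⟫
  set ψ : H →L[ℂ] ℂ := (innerSL ℂ y).comp M with hψ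
  have hψ_apply : ∀ x, ψ x = ⟪y, M x⟫ := fun x => rfl
  set Kl : H →ₗ[ℂ] K₀ := (K : H →ₗ[ℂ] K₀) with hKl
  have hker : LinearMap.ker Kl ≤ LinearMap.ker (ψ : H →ₗ[ℂ] ℂ) := by
    intro x hx
    have hx' : K x = 0 := hx
    have : ‖M x‖ ≤ Real.sqrt lam * ‖K x‖ := hineq x
    rw [hx', norm_zero, mul_zero] at this
    have hMx : M x = 0 := norm_le_zero_iff.mp this
    simp only [LinearMap.mem_ker, ContinuousLinearMap.coe_coe, hψ_apply, hMx,
      inner_zero_right]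
  -- functional on the range of K
  set e := Kl.quotKerEquivRange with he
  set φl : ↥(LinearMap.range Kl) →ₗ[ℂ] ℂ :=
    ((LinearMap.ker Kl).liftQ (ψ : H →ₗ[ℂ] ℂ) hker) ∘ₗ e.symm.toLinearMap with hφl
  have hφl_apply : ∀ (x : H) (hx : Kl x ∈ LinearMap.range Kl),
      φl ⟨Kl x, hx⟩ = ψ x := by
    intro x hx
    have : e.symm ⟨Kl x, hx⟩ = (LinearMap.ker Kl).mkQ x :=
      Kl.quotKerEquivRange_symm_apply_image x hx
    simp [hφl, this]
  have hbound : ∀ s : ↥(LinearMap.range Kl), ‖φl s‖ ≤ (Real.sqrt lam * ‖y‖) * ‖s‖ := by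
    rintro ⟨s, hs⟩
    obtain ⟨x, rfl⟩ := hs
    rw [hφl_apply x ⟨x, rfl⟩, hψ_apply]
    show ‖(⟪y, M x⟫ : ℂ)‖ ≤ (Real.sqrt lam * ‖y‖) * ‖K x‖
    calc ‖(⟪y, M x⟫ : ℂ)‖ ≤ ‖y‖ * ‖M x‖ := norm_inner_le_norm _ _
      _ ≤ ‖y‖ * (Real.sqrt lam * ‖K x‖) :=
          mul_le_mul_of_nonneg_left (hineq x) (norm_nonneg y)
      _ = (Real.sqrt lam * ‖y‖) * ‖K x‖ := by ring
  set φ : ↥(LinearMap.range Kl) →L[ℂ] ℂ := φl.mkContinuous _ hbound with hφ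
  obtain ⟨g, hg, -⟩ := exists_extension_norm_eq (LinearMap.range Kl) φ
  refine ⟨(InnerProductSpace.toDual ℂ K₀).symm g, ?_⟩
  apply ext_inner_right ℂ
  intro x
  rw [adjoint_inner_left, adjoint_inner_left]
  have h1 : ⟪(InnerProductSpace.toDual ℂ K₀).symm g, K x⟫ = g (K x) :=
    InnerProductSpace.toDual_symm_apply
  rw [h1]
  have h2 : g (K x) = φ ⟨Kl x, ⟨x, rfl⟩⟩ := hg ⟨Kl x, ⟨x, rfl⟩⟩
  rw [h2]
  show φl ⟨Kl x, ⟨x, rfl⟩⟩ = ⟪y, M x⟫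
  rw [hφl_apply x ⟨x, rfl⟩, hψ_apply]

set_option maxHeartbeats 1000000 in
lemma backward_dir (K : H →L[ℂ] K₀) (M : H →L[ℂ] M₀)
    (h : Set.range (adjoint M) ⊆ Set.range (adjoint K)) :
    ∃ lam : ℝ, 0 ≤ lam ∧
      (lam • (adjoint K).comp K - (adjoint M).comp M).IsPositive := by
  classical
  set N : Submodule ℂ K₀ := LinearMap.ker (adjoint K : K₀ →ₗ[ℂ] H) with hN
  have hNclosed : IsClosed (N : Set K₀) := ContinuousLinearMap.isClosed_ker (adjoint K)
  haveI : CompleteSpace N := hNclosed.completeSpace_coe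
  -- uniqueness in Nᗮ
  have uniq : ∀ z z' : K₀, z ∈ Nᗮ → z' ∈ Nᗮ → adjoint K z = adjoint K z' → z = z' := by
    intro z z' hz hz' hzz
    have hsub : z - z' ∈ N := by
      simp only [hN, LinearMap.mem_ker, ContinuousLinearMap.coe_coe, map_sub, hzz, sub_self]
    have hsub' : z - z' ∈ Nᗮ := Submodule.sub_mem _ hz hz'
    have h0 : z - z' = 0 :=
      Submodule.disjoint_def.mp (Submodule.orthogonal_disjoint N) _ hsub hsub'
    exact sub_eq_zero.mp h0
  -- the solution map
  have hex : ∀ y : M₀, ∃ z : K₀, adjoint K z = adjoint M y := fun y =>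
    h (Set.mem_range_self y)
  let f : M₀ → K₀ := fun y =>
    Classical.choose (hex y) - (Submodule.orthogonalProjection N (Classical.choose (hex y)) : K₀)
  have hf_mem : ∀ y, f y ∈ Nᗮ := fun y =>
    Submodule.sub_starProjection_mem_orthogonal _
  have hf_eq : ∀ y, adjoint K (f y) = adjoint M y := by
    intro y
    have h1 : adjoint K (Classical.choose (hex y)) = adjoint M y :=
      Classical.choose_spec (hex y)
    have h2 : adjoint K ((Submodule.orthogonalProjection N (Classical.choose (hex y)) : K₀)) = 0 :=
      (Submodule.orthogonalProjection N (Classical.choose (hex y))).2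
    simp only [f, map_sub, h1, h2, sub_zero]
  -- linearity
  let B : M₀ →ₗ[ℂ] K₀ :=
    { toFun := f
      map_add' := by
        intro a b
        refine uniq _ _ (hf_mem _) (Submodule.add_mem _ (hf_mem a) (hf_mem b)) ?_
        rw [hf_eq, map_add, map_add, hf_eq, hf_eq]
      map_smul' := by
        intro c a
        simp only [RingHom.id_apply]
        refine uniq _ _ (hf_mem _) (Submodule.smul_mem _ c (hf_mem a)) ?_
        rw [hf_eq, map_smul, map_smul, hf_eq] }
  -- continuity via closed graph theorem
  have hgraph : ∀ (u : ℕ → M₀) (x : M₀) (w : K₀),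
      Filter.Tendsto u Filter.atTop (nhds x) →
      Filter.Tendsto (B ∘ u) Filter.atTop (nhds w) → w = B x := by
    intro u x w hu hBu
    have hw_mem : w ∈ Nᗮ := by
      have : IsClosed ((Nᗮ : Submodule ℂ K₀) : Set K₀) := Submodule.isClosed_orthogonal N
      exact this.mem_of_tendsto hBu (Filter.Eventually.of_forall fun n => hf_mem (u n))
    refine uniq _ _ hw_mem (hf_mem x) ?_
    have h1 : Filter.Tendsto (fun n => adjoint K (B (u n))) Filter.atTop
        (nhds (adjoint K w)) := ((adjoint K).continuous.tendsto w).comp hBu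
    have h2 : Filter.Tendsto (fun n => adjoint M (u n)) Filter.atTop
        (nhds (adjoint M x)) := ((adjoint M).continuous.tendsto x).comp hu
    have heq : (fun n => adjoint K (B (u n))) = fun n => adjoint M (u n) := by
      funext n; exact hf_eq (u n)
    rw [heq] at h1
    have : adjoint K w = adjoint M x := tendsto_nhds_unique h1 h2
    rw [this]; exact (hf_eq x).symm
  let B' : M₀ →L[ℂ] K₀ := ContinuousLinearMap.ofSeqClosedGraph hgraph
  have hB'_eq : ∀ y, adjoint K (B' y) = adjoint M y := fun y => hf_eq y
  -- M x = (adjoint B') (K x)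
  have hfac : ∀ x : H, M x = adjoint B' (K x) := by
    intro x
    apply ext_inner_left ℂ
    intro v
    calc ⟪v, M x⟫ = ⟪adjoint M v, x⟫ := (adjoint_inner_left M x v).symm
      _ = ⟪adjoint K (B' v), x⟫ := by rw [hB'_eq]
      _ = ⟪B' v, K x⟫ := adjoint_inner_left K x (B' v)
      _ = ⟪v, adjoint B' (K x)⟫ := (adjoint_inner_right B' v (K x)).symm
  refine ⟨‖adjoint B'‖ ^ 2, sq_nonneg _, ?_, ?_⟩
  · -- self-adjointness
    have h1 : IsSelfAdjoint ((adjoint K).comp K) :=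
      isSelfAdjoint_iff'.mpr (by rw [adjoint_comp, adjoint_adjoint])
    have h2 : IsSelfAdjoint ((adjoint M).comp M) :=
      isSelfAdjoint_iff'.mpr (by rw [adjoint_comp, adjoint_adjoint])
    exact ((IsSelfAdjoint.smul (star_trivial (‖adjoint B'‖ ^ 2)) h1).sub h2).isSymmetric
  · -- positivity
    intro x
    rw [reApplyInnerSelf]
    have hK : ‖K x‖ ^ 2 = RCLike.re ⟪((adjoint K).comp K) x, x⟫ :=
      apply_norm_sq_eq_inner_adjoint_left K x
    have hM : ‖M x‖ ^ 2 = RCLike.re ⟪((adjoint M).comp M) x, x⟫ :=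
      apply_norm_sq_eq_inner_adjoint_left M x
    have hexp : RCLike.re (K := ℂ) ⟪(‖adjoint B'‖ ^ 2 • (adjoint K).comp K
          - (adjoint M).comp M) x, x⟫
        = ‖adjoint B'‖ ^ 2 * RCLike.re ⟪((adjoint K).comp K) x, x⟫
          - RCLike.re ⟪((adjoint M).comp M) x, x⟫ := by
      rw [ContinuousLinearMap.sub_apply, ContinuousLinearMap.smul_apply,
        RCLike.real_smul_eq_coe_smul (K := ℂ), inner_sub_left, inner_smul_left]
      simp [Complex.sub_re, Complex.mul_re, ← Complex.ofReal_pow]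
    rw [hexp, ← hK, ← hM]
    have hle : ‖M x‖ ≤ ‖adjoint B'‖ * ‖K x‖ := by
      rw [hfac x]; exact (adjoint B').le_opNorm (K x)
    nlinarith [norm_nonneg (M x), norm_nonneg (K x), norm_nonneg (adjoint B'),
      mul_nonneg (norm_nonneg (adjoint B')) (norm_nonneg (K x))]

end Aux

/-- For bounded operators `K, M`, there is `λ ≥ 0` with `M*M ≤ λ K*K`
iff `ran M* ⊆ ran K*`. -/
theorem stmt_3 {H K₀ M₀ : Type*}
    [NormedAddCommGroup H] [InnerProductSpace ℂ H] [CompleteSpace H]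
    [NormedAddCommGroup K₀] [InnerProductSpace ℂ K₀] [CompleteSpace K₀]
    [NormedAddCommGroup M₀] [InnerProductSpace ℂ M₀] [CompleteSpace M₀]
    (K : H →L[ℂ] K₀) (M : H →L[ℂ] M₀) :
    (∃ lam : ℝ, 0 ≤ lam ∧
        (lam • (adjoint K).comp K - (adjoint M).comp M).IsPositive) ↔
      Set.range (adjoint M) ⊆ Set.range (adjoint K) := by
  constructor
  · rintro ⟨lam, hlam, hpos⟩
    exact forward_dir K M hlam hpos
  · exact backward_dir K M
end

section
/- Let E be an effect on a Hilbert space H (0 ≤ E ≤ I) and φ ∈ H a nonzero vector. There exists λ > 0 such that λ|φ⟩⟨φ| ≤ E if and only if φ lies in the range of E^{1/2}. -/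
set_option synthInstance.maxHeartbeats 1000000
set_option maxHeartbeats 1000000
open ContinuousLinearMap

/-- For an effect `E` and a nonzero vector `φ`, there is `λ > 0` with
`λ |φ⟩⟨φ| ≤ E` iff `φ ∈ ran E^{1/2}`. -/
theorem stmt_4 {H : Type*} [NormedAddCommGroup H] [InnerProductSpace ℂ H] [CompleteSpace H]
    (E : H →L[ℂ] H) (hE : E.IsPositive) (hE1 : (1 - E).IsPositive)
    (φ : H) (hφ : φ ≠ 0) :
    (∃ lam : ℝ, 0 < lam ∧ (E - lam • (innerSL ℂ φ).smulRight φ).IsPositive) ↔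
      φ ∈ Set.range ⇑(CFC.sqrt E) := by
  have hE0 : 0 ≤ E := (nonneg_iff_isPositive E).mpr hE
  set S := CFC.sqrt E with hSdef
  have hS2 : S * S = E := CFC.sqrt_mul_sqrt_self E hE0
  have hSpos : S.IsPositive := (nonneg_iff_isPositive S).mp (CFC.sqrt_nonneg E)
  have hSsym : S.IsSymmetric := hSpos.1
  have key : ∀ x : H, RCLike.re (inner ℂ (E x) x : ℂ) = ‖S x‖ ^ 2 := by
    intro x
    have hEx : E x = S (S x) := by rw [← hS2]; rfl
    have h2 : (inner ℂ (S (S x)) x : ℂ) = inner ℂ (S x) (S x) := hSsym (S x) x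
    rw [hEx, h2, inner_self_eq_norm_sq]
  have hT : ∀ x : H, ((innerSL ℂ φ).smulRight φ) x = (inner ℂ φ x : ℂ) • φ := fun _ => rfl
  have hTin : ∀ x : H, RCLike.re (inner ℂ (((innerSL ℂ φ).smulRight φ) x) x : ℂ)
      = ‖(inner ℂ φ x : ℂ)‖ ^ 2 := by
    intro x
    rw [hT, inner_smul_left, RCLike.conj_mul]
    simp [← Complex.ofReal_pow]
  have hmain : ∀ (lam : ℝ) (x : H),
      RCLike.re (inner ℂ ((E - lam • (innerSL ℂ φ).smulRight φ) x) x : ℂ)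
        = ‖S x‖ ^ 2 - lam * ‖(inner ℂ φ x : ℂ)‖ ^ 2 := by
    intro lam x
    have h1 : ((E - lam • (innerSL ℂ φ).smulRight φ) x)
        = E x - ((lam : ℂ)) • (((innerSL ℂ φ).smulRight φ) x) := by
      rw [ContinuousLinearMap.sub_apply, ContinuousLinearMap.smul_apply,
        RCLike.real_smul_eq_coe_smul (K := ℂ)]; norm_cast
    have h2 : RCLike.re ((lam : ℂ) * (inner ℂ (((innerSL ℂ φ).smulRight φ) x) x : ℂ))
        = lam * RCLike.re (inner ℂ (((innerSL ℂ φ).smulRight φ) x) x : ℂ) :=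
      RCLike.re_ofReal_mul lam _
    rw [h1, inner_sub_left, map_sub, key, inner_smul_left, Complex.conj_ofReal, h2, hTin]
  constructor
  · rintro ⟨lam, hlam, hpos⟩
    -- the basic estimate
    have bound : ∀ x : H, ‖(inner ℂ φ x : ℂ)‖ ≤ (Real.sqrt lam)⁻¹ * ‖S x‖ := by
      intro x
      have h0 := hpos.2 x
      rw [reApplyInnerSelf_apply, hmain] at h0
      have h1 : lam * ‖(inner ℂ φ x : ℂ)‖ ^ 2 ≤ ‖S x‖ ^ 2 := by linarith
      have h2 : Real.sqrt lam * ‖(inner ℂ φ x : ℂ)‖ ≤ ‖S x‖ := by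
        nlinarith [Real.sq_sqrt hlam.le, Real.sqrt_nonneg lam, norm_nonneg (inner ℂ φ x : ℂ),
          norm_nonneg (S x), Real.sqrt_pos.mpr hlam]
      have h3 : 0 < Real.sqrt lam := Real.sqrt_pos.mpr hlam
      rw [inv_mul_eq_div, le_div_iff₀ h3]
      linarith [h2]
    set Sl : H →ₗ[ℂ] H := (S : H →ₗ[ℂ] H) with hSl
    have hSlx : ∀ x : H, Sl x = S x := fun _ => rfl
    have hker : LinearMap.ker Sl ≤ LinearMap.ker ((innerSL ℂ φ).toLinearMap) := by
      intro x hx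
      rw [LinearMap.mem_ker] at hx ⊢
      have : ‖(inner ℂ φ x : ℂ)‖ ≤ (Real.sqrt lam)⁻¹ * ‖S x‖ := bound x
      rw [show S x = Sl x from rfl, hx, norm_zero, mul_zero] at this
      have : (inner ℂ φ x : ℂ) = 0 := norm_le_zero_iff.mp this
      simpa [innerSL_apply_apply] using this
    set f₀ : (H ⧸ LinearMap.ker Sl) →ₗ[ℂ] ℂ :=
      (LinearMap.ker Sl).liftQ ((innerSL ℂ φ).toLinearMap) hker with hf₀
    set f : LinearMap.range Sl →ₗ[ℂ] ℂ :=
      f₀ ∘ₗ (Sl.quotKerEquivRange.symm : LinearMap.range Sl →ₗ[ℂ] (H ⧸ LinearMap.ker Sl)) with hf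
    have hfx : ∀ x : H, f ⟨Sl x, LinearMap.mem_range_self Sl x⟩ = inner ℂ φ x := by
      intro x
      have h1 : Sl.quotKerEquivRange.symm ⟨Sl x, LinearMap.mem_range_self Sl x⟩
          = (LinearMap.ker Sl).mkQ x := Sl.quotKerEquivRange_symm_apply_image x _
      simp only [hf, LinearMap.coe_comp, Function.comp_apply, LinearEquiv.coe_coe, h1]
      simp [hf₀, Submodule.liftQ_apply]
    have fbound : ∀ y : LinearMap.range Sl, ‖f y‖ ≤ (Real.sqrt lam)⁻¹ * ‖y‖ := by
      rintro ⟨y, hy⟩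
      obtain ⟨x, hx⟩ := hy
      have hy' : (⟨y, ⟨x, hx⟩⟩ : LinearMap.range Sl) = ⟨Sl x, LinearMap.mem_range_self Sl x⟩ :=
        Subtype.ext hx.symm
      rw [hy', hfx]
      have : ‖(⟨Sl x, LinearMap.mem_range_self Sl x⟩ : LinearMap.range Sl)‖ = ‖S x‖ := rfl
      rw [this]
      exact bound x
    set F : LinearMap.range Sl →L[ℂ] ℂ := f.mkContinuous _ fbound with hF
    obtain ⟨g, hg, -⟩ := exists_extension_norm_eq (LinearMap.range Sl) F
    set ψ := (InnerProductSpace.toDual ℂ H).symm g with hψ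
    refine ⟨ψ, ?_⟩
    refine (ext_inner_right ℂ ?_).symm
    intro x
    calc (inner ℂ φ x : ℂ) = f ⟨Sl x, LinearMap.mem_range_self Sl x⟩ := (hfx x).symm
      _ = F ⟨Sl x, LinearMap.mem_range_self Sl x⟩ := rfl
      _ = g (S x) := (hg ⟨Sl x, LinearMap.mem_range_self Sl x⟩).symm
      _ = inner ℂ ψ (S x) := by rw [hψ]; exact (InnerProductSpace.toDual_symm_apply).symm
      _ = inner ℂ (S ψ) x := (hSsym ψ x).symm
  · rintro ⟨ψ, hψ⟩
    have hψ0 : ψ ≠ 0 := by rintro rfl; simp at hψ; exact hφ hψ.symm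
    have hψpos : (0:ℝ) < ‖ψ‖ ^ 2 := pow_pos (norm_pos_iff.mpr hψ0) 2
    refine ⟨(‖ψ‖ ^ 2)⁻¹, inv_pos.mpr hψpos, ?_⟩
    have hTsym : ((innerSL ℂ φ).smulRight φ).IsSymmetric := by
      intro x y
      show (inner ℂ (((innerSL ℂ φ).smulRight φ) x) y : ℂ)
          = inner ℂ x (((innerSL ℂ φ).smulRight φ) y)
      rw [hT, hT, inner_smul_left, inner_smul_right, inner_conj_symm]
      ring
    constructor
    · refine ?_
      intro x y
      have hEsym : E.IsSymmetric := hE.1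
      set lam : ℝ := (‖ψ‖ ^ 2)⁻¹
      have h1 : ∀ z : H, ((E - lam • (innerSL ℂ φ).smulRight φ) z)
          = E z - ((lam : ℂ)) • (((innerSL ℂ φ).smulRight φ) z) := by
        intro z
        rw [ContinuousLinearMap.sub_apply, ContinuousLinearMap.smul_apply,
          RCLike.real_smul_eq_coe_smul (K := ℂ)]; norm_cast
      have hE' : (inner ℂ (E x) y : ℂ) = inner ℂ x (E y) := hEsym x y
      have hT' : (inner ℂ (((innerSL ℂ φ).smulRight φ) x) y : ℂ)
          = inner ℂ x (((innerSL ℂ φ).smulRight φ) y) := hTsym x y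
      show (inner ℂ ((E - lam • (innerSL ℂ φ).smulRight φ) x) y : ℂ)
          = inner ℂ x ((E - lam • (innerSL ℂ φ).smulRight φ) y)
      rw [h1, h1, inner_sub_left, inner_sub_right, inner_smul_left, inner_smul_right,
        Complex.conj_ofReal, hE', hT']
    · intro x
      rw [reApplyInnerSelf_apply, hmain]
      have hCS : ‖(inner ℂ φ x : ℂ)‖ ≤ ‖ψ‖ * ‖S x‖ := by
        calc ‖(inner ℂ φ x : ℂ)‖ = ‖(inner ℂ (S ψ) x : ℂ)‖ := by rw [hψ]
          _ = ‖(inner ℂ ψ (S x) : ℂ)‖ := congrArg norm (hSsym ψ x)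
          _ ≤ ‖ψ‖ * ‖S x‖ := norm_inner_le_norm ψ (S x)
      rw [sub_nonneg, inv_mul_le_iff₀ hψpos]
      nlinarith [hCS, norm_nonneg (inner ℂ φ x : ℂ), norm_nonneg (S x), norm_nonneg ψ]
end

section
/- Let E be an effect on H, φ ∈ ran E^{1/2} nonzero, and let E₀ be the restriction of E to the support subspace H_E = (ker E)^⊥. Then sup{λ ≥ 0 : λ|φ⟩⟨φ| ≤ E} = ‖E₀^{-1/2} φ‖^{-2}. -/
set_option synthInstance.maxHeartbeats 1000000
set_option maxHeartbeats 1000000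

open ContinuousLinearMap

/-- For an effect `E` and a nonzero `φ ∈ ran E^{1/2}`, writing
`ψ = E₀^{-1/2} φ` (i.e. `ψ` is the unique vector in the support subspace `(ker E)ᗮ` with
`E^{1/2} ψ = φ`), one has `sup {λ ≥ 0 : λ|φ⟩⟨φ| ≤ E} = ‖ψ‖⁻²`. -/
theorem stmt_5 {H : Type*} [NormedAddCommGroup H] [InnerProductSpace ℂ H] [CompleteSpace H]
    (E : H →L[ℂ] H) (hE : E.IsPositive) (hE1 : (1 - E).IsPositive)
    (φ ψ : H) (hφ : φ ≠ 0) (hψ : ψ ∈ (LinearMap.ker (E : H →ₗ[ℂ] H))ᗮ) (hψφ : CFC.sqrt E ψ = φ) :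
    sSup {lam : ℝ | 0 ≤ lam ∧ (E - lam • (innerSL ℂ φ).smulRight φ).IsPositive} =
      (‖ψ‖ ^ 2)⁻¹ := by
  set S : H →L[ℂ] H := CFC.sqrt E with hSdef
  have hE' : (0 : H →L[ℂ] H) ≤ E := (nonneg_iff_isPositive E).2 hE
  have hS_nonneg : (0 : H →L[ℂ] H) ≤ S := CFC.sqrt_nonneg E
  have hS_sa : IsSelfAdjoint S := .of_nonneg hS_nonneg
  have hSS : ∀ x, S (S x) = E x := by
    intro x
    have h2 : S * S = E := by
      have := CFC.sq_sqrt E hE'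
      rwa [sq] at this
    calc S (S x) = (S * S) x := rfl
    _ = E x := by rw [h2]
  have hSadj : ∀ x y : H, (inner ℂ (S x) y : ℂ) = inner ℂ x (S y) := by
    intro x y
    conv_lhs => rw [← hS_sa.adjoint_eq]
    exact adjoint_inner_left S y x
  have hψ0 : ψ ≠ 0 := by
    intro h
    exact hφ (by rw [← hψφ, h, map_zero])
  have hnψ : (0 : ℝ) < ‖ψ‖ ^ 2 := pow_pos (norm_pos_iff.2 hψ0) 2
  set P : H →L[ℂ] H := (innerSL ℂ φ).smulRight φ with hPdef
  have hP_apply : ∀ x : H, P x = (inner ℂ φ x : ℂ) • φ := fun x => rfl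
  -- inner ℂ product with φ in terms of S and ψ
  have hφinner : ∀ x : H, (inner ℂ φ x : ℂ) = inner ℂ ψ (S x) := by
    intro x
    rw [← hψφ, hSadj]
  have hcP : ∀ (c : ℝ) (x : H), (c • P) x = ((c : ℂ) * (inner ℂ φ x : ℂ)) • φ := by
    intro c x
    rw [smul_apply, hP_apply, ← smul_assoc]
    congr 1
  -- quadratic form of E - c • P
  have hquad : ∀ (c : ℝ) (x : H),
      (E - c • P).reApplyInnerSelf x
        = ‖S x‖ ^ 2 - c * ‖(inner ℂ ψ (S x) : ℂ)‖ ^ 2 := by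
    intro c x
    rw [reApplyInnerSelf, sub_apply, inner_sub_left, map_sub]
    congr 1
    · rw [← hSS x, hSadj]
      exact inner_self_eq_norm_sq (S x)
    · rw [hcP, inner_smul_left]
      have : (starRingEnd ℂ) ((c : ℂ) * (inner ℂ φ x : ℂ)) * (inner ℂ φ x : ℂ)
          = ((c * ‖(inner ℂ φ x : ℂ)‖ ^ 2 : ℝ) : ℂ) := by
        rw [map_mul, Complex.conj_ofReal, mul_assoc,
          mul_comm ((starRingEnd ℂ) (inner ℂ φ x : ℂ)), Complex.mul_conj,
          Complex.ofReal_mul]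
        norm_num [Complex.normSq_eq_norm_sq]
      rw [this, ← hφinner x]
      simp [← Complex.ofReal_pow]
  -- self-adjointness of E - c • P
  have hsub_sa : ∀ c : ℝ, IsSelfAdjoint (E - c • P) := by
    intro c
    rw [isSelfAdjoint_iff_isSymmetric]
    intro x y
    have hEsym : (inner ℂ (E x) y : ℂ) = inner ℂ x (E y) :=
      hE.1 x y
    have hPsym : (inner ℂ ((c • P) x) y : ℂ) = inner ℂ x ((c • P) y) := by
      rw [hcP, hcP, inner_smul_left, inner_smul_right, map_mul, Complex.conj_ofReal,
        inner_conj_symm]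
      ring
    calc (inner ℂ ((E - c • P) x) y : ℂ) = inner ℂ (E x) y - inner ℂ ((c • P) x) y := by
          rw [sub_apply, inner_sub_left]
      _ = inner ℂ x (E y) - inner ℂ x ((c • P) y) := by rw [hEsym, hPsym]
      _ = inner ℂ x ((E - c • P) y) := by rw [sub_apply, inner_sub_right]
  -- ψ is in the closure of the range of S
  have hψ_cl : ψ ∈ closure ((LinearMap.range (S : H →ₗ[ℂ] H) : Submodule ℂ H) : Set H) := by
    have hker : LinearMap.ker (S : H →ₗ[ℂ] H) ≤ LinearMap.ker (E : H →ₗ[ℂ] H) := by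
      intro x hx
      have hx' : S x = 0 := hx
      have : E x = 0 := by rw [← hSS x, hx', map_zero]
      exact this
    have h1 : ψ ∈ (LinearMap.ker (S : H →ₗ[ℂ] H))ᗮ := Submodule.orthogonal_le hker hψ
    have hro : (LinearMap.range (S : H →ₗ[ℂ] H))ᗮ ≤ LinearMap.ker (S : H →ₗ[ℂ] H) := by
      intro x hx
      have h0 : (inner ℂ (S (S x)) x : ℂ) = 0 :=
        (Submodule.mem_orthogonal _ x).1 hx _ ⟨S x, rfl⟩
      rw [hSadj] at h0
      rw [hSadj] at h0
      have : S x = 0 := by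
        have := inner_self_eq_zero (𝕜 := ℂ) (x := S x)
        rw [← hSadj] at h0
        exact this.1 h0
      exact this
    have h2 : ψ ∈ (LinearMap.range (S : H →ₗ[ℂ] H))ᗮᗮ := Submodule.orthogonal_le hro h1
    rw [Submodule.orthogonal_orthogonal_eq_closure] at h2
    rwa [← Submodule.topologicalClosure_coe]
  -- the candidate supremum
  set c₀ : ℝ := (‖ψ‖ ^ 2)⁻¹ with hc₀
  refine IsGreatest.csSup_eq ⟨⟨inv_nonneg.2 hnψ.le, ?_⟩, ?_⟩
  · -- membership : E - c₀ • P is positive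
    refine ⟨isSelfAdjoint_iff_isSymmetric.mp (hsub_sa c₀), fun x => ?_⟩
    rw [hquad]
    have hcs : ‖(inner ℂ ψ (S x) : ℂ)‖ ≤ ‖ψ‖ * ‖S x‖ := norm_inner_le_norm _ _
    have hcs2 : ‖(inner ℂ ψ (S x) : ℂ)‖ ^ 2 ≤ ‖ψ‖ ^ 2 * ‖S x‖ ^ 2 := by
      rw [← mul_pow]; exact pow_le_pow_left₀ (norm_nonneg _) hcs 2
    have : c₀ * ‖(inner ℂ ψ (S x) : ℂ)‖ ^ 2 ≤ ‖S x‖ ^ 2 := by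
      calc c₀ * ‖(inner ℂ ψ (S x) : ℂ)‖ ^ 2 ≤ c₀ * (‖ψ‖ ^ 2 * ‖S x‖ ^ 2) := by
            exact mul_le_mul_of_nonneg_left hcs2 (inv_nonneg.2 hnψ.le)
        _ = ‖S x‖ ^ 2 := by rw [hc₀, inv_mul_cancel_left₀ hnψ.ne']
    linarith
  · -- upper bound
    rintro lam ⟨hlam0, hlam⟩
    have key : ∀ y ∈ ((LinearMap.range (S : H →ₗ[ℂ] H) : Submodule ℂ H) : Set H),
        lam * ‖(inner ℂ ψ y : ℂ)‖ ^ 2 ≤ ‖y‖ ^ 2 := by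
      rintro y ⟨x, rfl⟩
      have := hlam.2 x
      rw [hquad] at this
      change lam * ‖(inner ℂ ψ (S x) : ℂ)‖ ^ 2 ≤ ‖S x‖ ^ 2
      linarith
    have hclosed : IsClosed {y : H | lam * ‖(inner ℂ ψ y : ℂ)‖ ^ 2 ≤ ‖y‖ ^ 2} := by
      apply isClosed_le
      · exact (continuous_const.mul (((innerSL ℂ ψ).continuous.norm).pow 2))
      · exact (continuous_norm.pow 2)
    have hψmem : lam * ‖(inner ℂ ψ ψ : ℂ)‖ ^ 2 ≤ ‖ψ‖ ^ 2 :=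
      closure_minimal key hclosed hψ_cl
    have hn : ‖(inner ℂ ψ ψ : ℂ)‖ = ‖ψ‖ ^ 2 := by
      rw [inner_self_eq_norm_sq_to_K, norm_pow, RCLike.norm_ofReal, abs_norm]
    rw [hn] at hψmem
    have h1 : lam * ‖ψ‖ ^ 2 ≤ 1 := by nlinarith
    calc lam = lam * ‖ψ‖ ^ 2 * (‖ψ‖ ^ 2)⁻¹ := by
          rw [mul_assoc, mul_inv_cancel₀ hnψ.ne', mul_one]
      _ ≤ 1 * (‖ψ‖ ^ 2)⁻¹ := mul_le_mul_of_nonneg_right h1 (inv_nonneg.2 hnψ.le)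
      _ = c₀ := by rw [one_mul, hc₀]
end

section
/- Let E be an effect on H, ψ ∈ H with ‖ψ‖ ≤ 1, and let E = J*PJ be a Naimark dilation of E with J : H → K an isometry and P a projection on K. Then |ψ⟩⟨ψ| ≤ E if and only if there exists η in the closure of ran(PJ) with ‖η‖ ≤ 1 such that ψ = J*η. -/
set_option synthInstance.maxHeartbeats 1000000
set_option maxHeartbeats 1000000

open scoped InnerProductSpace NNReal

open ContinuousLinearMap

/-- Let `E = J*PJ` be a Naimark dilation of the effect `E` (with `J` an
isometry and `P` a projection). For `‖ψ‖ ≤ 1`: `|ψ⟩⟨ψ| ≤ E` iff `ψ = J*η` for some `η` in the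
closure of `ran (PJ)` with `‖η‖ ≤ 1`. -/
theorem stmt_6 {H K : Type*}
    [NormedAddCommGroup H] [InnerProductSpace ℂ H] [CompleteSpace H]
    [NormedAddCommGroup K] [InnerProductSpace ℂ K] [CompleteSpace K]
    (E : H →L[ℂ] H) (hE : E.IsPositive) (hE1 : (1 - E).IsPositive)
    (J : H →L[ℂ] K) (hJ : (adjoint J).comp J = 1)
    (P : K →L[ℂ] K) (hPsa : IsSelfAdjoint P) (hPidem : IsIdempotentElem P)
    (hdil : E = ((adjoint J).comp P).comp J)
    (ψ : H) (hψ : ‖ψ‖ ≤ 1) :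
    (E - (innerSL ℂ ψ).smulRight ψ).IsPositive ↔
      ∃ η ∈ closure (Set.range ⇑(P.comp J)), ‖η‖ ≤ 1 ∧ ψ = adjoint J η := by
  have hPadj : adjoint P = P := isSelfAdjoint_iff'.mp hPsa
  have hPP : ∀ u : K, P (P u) = P u := by
    intro u
    conv_rhs => rw [← hPidem]
    rfl
  -- inner products with E
  have hPinner : ∀ u v : K, ⟪P u, v⟫_ℂ = ⟪u, P v⟫_ℂ := by
    intro u v
    conv_lhs => rw [← hPadj]
    rw [adjoint_inner_left]
  have hEinner : ∀ x : H, ⟪E x, x⟫_ℂ = ⟪(P.comp J) x, (P.comp J) x⟫_ℂ := by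
    intro x
    rw [hdil]
    simp only [comp_apply]
    rw [adjoint_inner_left, hPinner]
    conv_rhs => rw [hPinner, hPP]
  have hRinner : ∀ x : H, ⟪((innerSL ℂ ψ).smulRight ψ) x, x⟫_ℂ
      = (starRingEnd ℂ) ⟪ψ, x⟫_ℂ * ⟪ψ, x⟫_ℂ := by
    intro x
    simp only [smulRight_apply, innerSL_apply_apply, inner_smul_left]
  have hre : ∀ x : H, ((E - (innerSL ℂ ψ).smulRight ψ).reApplyInnerSelf x)
      = ‖(P.comp J) x‖ ^ 2 - ‖⟪ψ, x⟫_ℂ‖ ^ 2 := by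
    intro x
    rw [reApplyInnerSelf]
    simp only [sub_apply, inner_sub_left, map_sub, hEinner, hRinner]
    rw [RCLike.conj_mul]
    simp only [inner_self_eq_norm_sq]
    norm_cast
  -- self-adjointness of the rank-one operator
  have hRsa : IsSelfAdjoint ((innerSL ℂ ψ).smulRight ψ) := by
    rw [isSelfAdjoint_iff']
    refine (((innerSL ℂ ψ).smulRight ψ).eq_adjoint_iff _).mpr (fun x y => ?_) |>.symm
    simp only [smulRight_apply, innerSL_apply_apply, inner_smul_left, inner_smul_right]
    rw [← inner_conj_symm x ψ]
    ring
  -- η in the closure of range (P ∘ J) is fixed by P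
  have hfix : ∀ η ∈ closure (Set.range ⇑(P.comp J)), P η = η := by
    intro η hη
    have hcl : IsClosed {y : K | P y = y} := isClosed_eq P.continuous continuous_id
    have hsub : Set.range ⇑(P.comp J) ⊆ {y : K | P y = y} := by
      rintro _ ⟨x, rfl⟩
      simp only [Set.mem_setOf_eq, comp_apply, hPP]
    exact hcl.closure_subset_iff.mpr hsub hη
  constructor
  · -- forward direction
    intro h
    have key : ∀ x : H, ‖⟪ψ, x⟫_ℂ‖ ≤ ‖(P.comp J) x‖ := by
      intro x
      have h2 := h.2 x
      rw [hre x] at h2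
      nlinarith [norm_nonneg (⟪ψ, x⟫_ℂ), norm_nonneg ((P.comp J) x)]
    set Tl : H →ₗ[ℂ] K := ((P.comp J : H →L[ℂ] K) : H →ₗ[ℂ] K) with hTl
    have hTlapp : ∀ x : H, Tl x = (P.comp J) x := fun x => rfl
    set R0 : Submodule ℂ K := LinearMap.range Tl with hR0
    set S : Submodule ℂ K := R0.topologicalClosure with hS
    haveI : CompleteSpace S := (Submodule.isClosed_topologicalClosure R0).completeSpace_coe
    have hker : LinearMap.ker Tl ≤ LinearMap.ker ((innerSL ℂ ψ) : H →ₗ[ℂ] ℂ) := by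
      intro x hx
      have hx' : Tl x = 0 := hx
      have := key x
      rw [← hTlapp, hx'] at this
      simp only [norm_zero] at this
      have : ‖⟪ψ, x⟫_ℂ‖ = 0 := le_antisymm this (norm_nonneg _)
      simpa [LinearMap.mem_ker] using norm_eq_zero.mp this
    set φ₀ₗ : R0 →ₗ[ℂ] ℂ :=
      ((LinearMap.ker Tl).liftQ ((innerSL ℂ ψ) : H →ₗ[ℂ] ℂ) hker).comp
        (Tl.quotKerEquivRange.symm : R0 →ₗ[ℂ] (H ⧸ LinearMap.ker Tl)) with hφ₀ₗ
    have hφ₀ₗ_app : ∀ x : H, φ₀ₗ ⟨Tl x, LinearMap.mem_range_self Tl x⟩ = ⟪ψ, x⟫_ℂ := by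
      intro x
      simp only [hφ₀ₗ, LinearMap.comp_apply, LinearEquiv.coe_coe]
      rw [Tl.quotKerEquivRange_symm_apply_image x (LinearMap.mem_range_self Tl x)]
      simp [Submodule.liftQ_apply]
    have hbound : ∀ v : R0, ‖φ₀ₗ v‖ ≤ 1 * ‖v‖ := by
      rintro ⟨v, hv⟩
      obtain ⟨x, rfl⟩ := hv
      rw [hφ₀ₗ_app x, one_mul]
      calc ‖⟪ψ, x⟫_ℂ‖ ≤ ‖(P.comp J) x‖ := key x
        _ = ‖(⟨Tl x, LinearMap.mem_range_self Tl x⟩ : R0)‖ := rfl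
    set φ₀ : R0 →L[ℂ] ℂ := LinearMap.mkContinuous φ₀ₗ 1 hbound with hφ₀
    have hφ₀norm : ‖φ₀‖ ≤ 1 := LinearMap.mkContinuous_norm_le φ₀ₗ zero_le_one hbound
    -- inclusion of R0 into its closure S
    set eincl : R0 →L[ℂ] S :=
      LinearMap.mkContinuous (Submodule.inclusion (R0.le_topologicalClosure)) 1
        (fun x => by rw [one_mul]; exact le_of_eq rfl) with heincl
    have h_e : ∀ x : R0, ‖x‖ ≤ ((1 : ℝ≥0) : ℝ) * ‖eincl x‖ := by
      intro x
      rw [NNReal.coe_one, one_mul]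
      exact le_of_eq rfl
    have h_dense : DenseRange eincl := by
      intro y
      have hy : (y : K) ∈ closure (R0 : Set K) := by
        rw [← Submodule.topologicalClosure_coe]; exact y.2
      rw [mem_closure_iff_seq_limit] at hy
      obtain ⟨u, hu, hlim⟩ := hy
      rw [mem_closure_iff_seq_limit]
      refine ⟨fun n => eincl ⟨u n, hu n⟩, fun n => ⟨_, rfl⟩, ?_⟩
      rw [tendsto_subtype_rng]
      exact hlim
    set φ : S →L[ℂ] ℂ :=
      φ₀.extend eincl with hφ
    have hφnorm : ‖φ‖ ≤ 1 := by
      have := φ₀.opNorm_extend_le h_dense h_e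
      simpa using this.trans (by simpa using hφ₀norm)
    set η' : S := (InnerProductSpace.toDual ℂ S).symm φ with hη'
    have hset : closure (Set.range ⇑(P.comp J)) = (S : Set K) := by
      rw [hS, Submodule.topologicalClosure_coe]
      congr 1
    refine ⟨(η' : K), ?_, ?_, ?_⟩
    · rw [hset]; exact η'.2
    · calc ‖(η' : K)‖ = ‖η'‖ := rfl
        _ = ‖φ‖ := by rw [hη']; exact (InnerProductSpace.toDual ℂ S).symm.norm_map φ
        _ ≤ 1 := hφnorm
    · -- ψ = adjoint J η'
      have hηfix : P (η' : K) = (η' : K) := by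
        apply hfix
        rw [hset]; exact η'.2
      have hinner : ∀ x : H, ⟪(η' : K), (P.comp J) x⟫_ℂ = ⟪ψ, x⟫_ℂ := by
        intro x
        have hmemS : (P.comp J) x ∈ S := R0.le_topologicalClosure (LinearMap.mem_range_self Tl x)
        have h1 : ⟪(η' : K), (P.comp J) x⟫_ℂ = ⟪η', (⟨(P.comp J) x, hmemS⟩ : S)⟫_ℂ := by
          rw [Submodule.coe_inner]
        rw [h1, hη', InnerProductSpace.toDual_symm_apply]
        have h2 : (⟨(P.comp J) x, hmemS⟩ : S) = eincl ⟨Tl x, LinearMap.mem_range_self Tl x⟩ := rfl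
        rw [h2, hφ, ContinuousLinearMap.extend_eq _ h_dense
          (ContinuousLinearMap.isUniformEmbedding_of_bound _ h_e).isUniformInducing]
        rw [hφ₀]
        exact hφ₀ₗ_app x
      refine ext_inner_right ℂ (fun x => ?_)
      rw [adjoint_inner_left, ← hηfix, hPinner]
      exact (hinner x).symm
  · -- reverse direction
    rintro ⟨η, hmem, hnorm, rfl⟩
    have hηfix : P η = η := hfix η hmem
    have key : ∀ x : H, ‖⟪adjoint J η, x⟫_ℂ‖ ≤ ‖(P.comp J) x‖ := by
      intro x
      rw [adjoint_inner_left, ← hηfix, hPinner]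
      calc ‖⟪η, P (J x)⟫_ℂ‖ ≤ ‖η‖ * ‖P (J x)‖ := norm_inner_le_norm η _
        _ ≤ 1 * ‖(P.comp J) x‖ := by
            apply mul_le_mul_of_nonneg_right hnorm (norm_nonneg _)
        _ = ‖(P.comp J) x‖ := one_mul _
    refine ⟨hE.1.sub hRsa.isSymmetric, fun x => ?_⟩
    rw [hre x]
    have := key x
    nlinarith [norm_nonneg (⟪adjoint J η, x⟫_ℂ), norm_nonneg ((P.comp J) x)]
end

section
/- Let E be an effect on H with Naimark dilation E = J*PJ (J : H → K an isometry, P a projection on K), and let A be an effect on H. Then A ≤ E if and only if A = J*QPJ for some effect Q on K that commutes with P. -/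
set_option synthInstance.maxHeartbeats 1000000
set_option maxHeartbeats 1000000

open ContinuousLinearMap

/-- Let `E = J*PJ` be a Naimark dilation of the effect `E`. For an effect `A`:
`A ≤ E` iff `A = J* Q P J` for some effect `Q` on `K` commuting with `P`. -/
theorem stmt_7 {H K : Type*}
    [NormedAddCommGroup H] [InnerProductSpace ℂ H] [CompleteSpace H]
    [NormedAddCommGroup K] [InnerProductSpace ℂ K] [CompleteSpace K]
    (E : H →L[ℂ] H) (hE : E.IsPositive) (hE1 : (1 - E).IsPositive)
    (J : H →L[ℂ] K) (hJ : (adjoint J).comp J = 1)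
    (P : K →L[ℂ] K) (hPsa : IsSelfAdjoint P) (hPidem : IsIdempotentElem P)
    (hdil : E = ((adjoint J).comp P).comp J)
    (A : H →L[ℂ] H) (hA : A.IsPositive) (hA1 : (1 - A).IsPositive) :
    (E - A).IsPositive ↔
      ∃ Q : K →L[ℂ] K, Q.IsPositive ∧ (1 - Q).IsPositive ∧ Commute Q P ∧
        A = (((adjoint J).comp Q).comp P).comp J := by
  have hPadj : adjoint P = P := hPsa.adjoint_eq
  have hPP : ∀ y, P (P y) = P y := fun y => DFunLike.congr_fun hPidem y
  -- `P` is a contraction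
  have hPnorm : ∀ y : K, ‖P y‖ ≤ ‖y‖ := by
    intro y
    have h1 : (inner ℂ (P y) y : ℂ) = inner ℂ (P y) (P y) := by
      have h := adjoint_inner_left P y (P y)
      rw [hPadj, hPP] at h
      exact h
    have h2 : ‖P y‖ ^ 2 = RCLike.re (inner ℂ (P y) y : ℂ) := by
      rw [h1, inner_self_eq_norm_sq]
    have h3 : RCLike.re (inner ℂ (P y) y : ℂ) ≤ ‖P y‖ * ‖y‖ :=
      (RCLike.re_le_norm _).trans (norm_inner_le_norm _ _)
    nlinarith [norm_nonneg (P y), norm_nonneg y]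
  constructor
  · -- forward direction
    intro hEA
    classical
    set T : H →L[ℂ] K := P ∘L J with hTdef
    -- square root of `A`
    have hA0 : (0 : H →L[ℂ] H) ≤ A := (nonneg_iff_isPositive A).mpr hA
    set S : H →L[ℂ] H := CFC.sqrt A with hSdef
    have hS0 : (0 : H →L[ℂ] H) ≤ S := CFC.sqrt_nonneg A
    have hSpos : S.IsPositive := (nonneg_iff_isPositive S).mp hS0
    have hSsa : adjoint S = S := hSpos.isSelfAdjoint.adjoint_eq
    have hS2 : S ∘L S = A := CFC.sqrt_mul_sqrt_self A hA0
    -- key inequality `‖S x‖ ≤ ‖T x‖`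
    have key : ∀ x : H, ‖S x‖ ≤ ‖T x‖ := by
      intro x
      have h1 : ‖S x‖ ^ 2 = RCLike.re (inner ℂ (A x) x : ℂ) := by
        rw [← hS2]
        have h : (inner ℂ ((S ∘L S) x) x : ℂ) = inner ℂ (S x) (S x) := by
          have h := adjoint_inner_left S x (S x)
          rw [hSsa] at h
          rw [comp_apply, h]
        rw [h, inner_self_eq_norm_sq]
      have h2 : ‖T x‖ ^ 2 = RCLike.re (inner ℂ (E x) x : ℂ) := by
        have hEx : E x = adjoint J (P (J x)) := by rw [hdil]; rfl
        have ha : (inner ℂ (E x) x : ℂ) = inner ℂ (P (J x)) (J x) := by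
          rw [hEx, adjoint_inner_left]
        have hb : (inner ℂ (P (J x)) (P (J x)) : ℂ) = inner ℂ (P (J x)) (J x) := by
          have h := adjoint_inner_left P (J x) (P (J x))
          rw [hPadj, hPP] at h
          exact h.symm
        have : (inner ℂ (T x) (T x) : ℂ) = inner ℂ (E x) x := by
          rw [ha, ← hb]; rfl
        rw [← this, inner_self_eq_norm_sq]
      have h3 : RCLike.re (inner ℂ (A x) x : ℂ) ≤ RCLike.re (inner ℂ (E x) x : ℂ) := by
        have := hEA.inner_nonneg_left x
        simp only [reApplyInnerSelf, sub_apply, inner_sub_left, map_sub] at this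
        have h := (RCLike.nonneg_iff.mp this).1
        rw [map_sub] at h
        linarith
      nlinarith [norm_nonneg (S x), norm_nonneg (T x)]
    -- factor `S` through the range of `T`
    have hker : LinearMap.ker (T : H →ₗ[ℂ] K) ≤ LinearMap.ker (S : H →ₗ[ℂ] H) := by
      intro x hx
      simp only [LinearMap.mem_ker, ContinuousLinearMap.coe_coe] at hx ⊢
      have := key x
      rw [hx, norm_zero] at this
      exact norm_le_zero_iff.mp this
    set R : Submodule ℂ K := LinearMap.range (T : H →ₗ[ℂ] K) with hRdef
    set f₀ : R →ₗ[ℂ] H :=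
      ((LinearMap.ker (T : H →ₗ[ℂ] K)).liftQ (S : H →ₗ[ℂ] H) hker) ∘ₗ
        ((LinearMap.quotKerEquivRange (T : H →ₗ[ℂ] K)).symm : R →ₗ[ℂ] _) with hf₀def
    have hf₀ : ∀ (x : H) (h : T x ∈ R), f₀ ⟨T x, h⟩ = S x := by
      intro x h
      have h1 : (LinearMap.quotKerEquivRange (T : H →ₗ[ℂ] K)).symm ⟨T x, h⟩ =
          Submodule.Quotient.mk x := by
        rw [LinearEquiv.symm_apply_eq]
        apply Subtype.ext
        simp [LinearMap.quotKerEquivRange_apply_mk]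
      simp only [hf₀def, LinearMap.comp_apply, LinearEquiv.coe_coe, h1, Submodule.liftQ_apply,
        ContinuousLinearMap.coe_coe]
    have hf₀b : ∀ y : R, ‖f₀ y‖ ≤ 1 * ‖y‖ := by
      rintro ⟨y, hy⟩
      obtain ⟨x, rfl⟩ := hy
      have hmem : T x ∈ R := LinearMap.mem_range_self _ x
      have : (⟨(T : H →ₗ[ℂ] K) x, LinearMap.mem_range_self _ x⟩ : R) = ⟨T x, hmem⟩ := rfl
      rw [this, hf₀ x hmem, one_mul]
      exact key x
    set f₁ : R →L[ℂ] H := LinearMap.mkContinuous f₀ 1 hf₀b with hf₁def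
    have hf₁norm : ‖f₁‖ ≤ 1 := LinearMap.mkContinuous_norm_le f₀ zero_le_one hf₀b
    set M : Submodule ℂ K := R.topologicalClosure with hMdef
    haveI : CompleteSpace M := R.isClosed_topologicalClosure.completeSpace_coe
    -- the inclusion of `R` into its closure
    set ι : R →L[ℂ] M :=
      LinearMap.mkContinuous (Submodule.inclusion R.le_topologicalClosure) 1
        (fun y => by rw [one_mul]; exact le_of_eq rfl) with hιdef
    have hιb : ∀ y : R, ‖y‖ ≤ (1 : NNReal) * ‖ι y‖ := by
      intro y
      rw [NNReal.coe_one, one_mul]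
      exact le_of_eq rfl
    have himg : (Subtype.val '' Set.range ι) = (R : Set K) := by
      ext z
      constructor
      · rintro ⟨w, ⟨v, rfl⟩, rfl⟩
        exact v.2
      · intro hz
        exact ⟨⟨z, R.le_topologicalClosure hz⟩, ⟨⟨z, hz⟩, rfl⟩, rfl⟩
    have hdense : DenseRange ι := by
      intro y
      rw [closure_subtype, himg, ← Submodule.topologicalClosure_coe]
      exact y.2
    set f₂ : M →L[ℂ] H :=
      f₁.extend ι
      with hf₂def
    have hf₂norm : ‖f₂‖ ≤ 1 := by
      have h := ContinuousLinearMap.opNorm_extend_le (f := f₁) (e := ι) (h_dense := hdense)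
        (h_e := hιb)
      rw [NNReal.coe_one, one_mul] at h
      exact h.trans hf₁norm
    set C : K →L[ℂ] H := f₂ ∘L (M.orthogonalProjectionOnto : K →L[ℂ] M) with hCdef
    have hCT : C ∘L T = S := by
      ext x
      have hmemR : T x ∈ R := LinearMap.mem_range_self _ x
      have hmem : T x ∈ M := R.le_topologicalClosure hmemR
      have h1 : M.orthogonalProjectionOnto (T x) = ⟨T x, hmem⟩ :=
        Submodule.orthogonalProjectionOnto_mem_subspace_eq_self (⟨T x, hmem⟩ : M)
      have h2 : (⟨T x, hmem⟩ : M) = ι ⟨T x, hmemR⟩ := rfl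
      simp only [comp_apply, hCdef, h1, h2]
      rw [hf₂def, extend_eq _ hdense (isUniformEmbedding_of_bound ι hιb).isUniformInducing]
      show f₀ _ = _
      exact hf₀ x hmemR
    have hCnorm : ∀ y : K, ‖C y‖ ≤ ‖y‖ := by
      intro y
      calc ‖C y‖ = ‖f₂ (M.orthogonalProjectionOnto y)‖ := rfl
        _ ≤ ‖f₂‖ * ‖M.orthogonalProjectionOnto y‖ := le_opNorm _ _
        _ ≤ 1 * ‖y‖ := by
            apply mul_le_mul hf₂norm _ (norm_nonneg _) zero_le_one
            calc ‖M.orthogonalProjectionOnto y‖ ≤ ‖(M.orthogonalProjectionOnto : K →L[ℂ] M)‖ * ‖y‖ :=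
                  le_opNorm _ _
              _ ≤ 1 * ‖y‖ := by
                  exact mul_le_mul_of_nonneg_right (Submodule.orthogonalProjectionOnto_norm_le M)
                    (norm_nonneg _)
              _ = ‖y‖ := one_mul _
        _ = ‖y‖ := one_mul _
    -- the effect `Q`
    refine ⟨P ∘L ((adjoint C ∘L C) ∘L P), ?_, ?_, ?_, ?_⟩
    · have h1 : (adjoint C ∘L ((1 : H →L[ℂ] H) ∘L C)).IsPositive :=
        isPositive_one.adjoint_conj C
      rw [one_def, id_comp] at h1
      have h2 := h1.adjoint_conj P
      rwa [hPadj] at h2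
    · constructor
      · have h1 : (adjoint C ∘L ((1 : H →L[ℂ] H) ∘L C)).IsPositive :=
          isPositive_one.adjoint_conj C
        rw [one_def, id_comp] at h1
        have h2 := h1.adjoint_conj P
        rw [hPadj] at h2
        exact ((IsSelfAdjoint.one (K →L[ℂ] K)).sub h2.isSelfAdjoint).isSymmetric
      · intro y
        have hQy : (inner ℂ ((P ∘L ((adjoint C ∘L C) ∘L P)) y) y : ℂ) =
            inner ℂ (C (P y)) (C (P y)) := by
          have h1 : (P ∘L ((adjoint C ∘L C) ∘L P)) y = P (adjoint C (C (P y))) := rfl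
          rw [h1]
          calc (inner ℂ (P (adjoint C (C (P y)))) y : ℂ)
              = inner ℂ (adjoint C (C (P y))) (P y) := by
                have h := adjoint_inner_left P y (adjoint C (C (P y)))
                rw [hPadj] at h
                exact h
            _ = inner ℂ (C (P y)) (C (P y)) := adjoint_inner_left C (P y) (C (P y))
        have hle : ‖C (P y)‖ ≤ ‖y‖ := (hCnorm (P y)).trans (hPnorm y)
        have : (0:ℝ) ≤ ‖y‖ ^ 2 - ‖C (P y)‖ ^ 2 := by
          nlinarith [norm_nonneg (C (P y)), norm_nonneg y]
        simp only [reApplyInnerSelf, sub_apply, one_apply, inner_sub_left, map_sub]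
        rw [hQy, one_apply_eq_self, inner_self_eq_norm_sq, inner_self_eq_norm_sq]
        linarith
    · show _ * _ = _ * _
      ext y
      simp only [mul_apply_eq_comp, comp_apply, hPP]
    · -- the dilation formula
      have hS' : S = (adjoint J ∘L P) ∘L adjoint C := by
        conv_lhs => rw [← hSsa, ← hCT]
        rw [adjoint_comp, hTdef, adjoint_comp, hPadj]
      ext x
      have hTx : P (J x) = T x := rfl
      calc A x = S (S x) := by rw [← hS2]; rfl
        _ = (((adjoint J).comp P).comp (adjoint C)) (S x) := DFunLike.congr_fun hS' (S x)
        _ = adjoint J (P (adjoint C ((C.comp T) x))) := by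
            rw [DFunLike.congr_fun hCT x]
            rfl
        _ = ((((adjoint J).comp (P ∘L ((adjoint C ∘L C) ∘L P))).comp P).comp J) x := by
            simp only [comp_apply, coe_comp', Function.comp_apply]
            rw [hPP (J x), hTx]
  · -- reverse direction
    rintro ⟨Q, hQ, hQ1, hcomm, hAeq⟩
    have hPQ : ∀ y, P (Q y) = Q (P y) := fun y => (DFunLike.congr_fun hcomm y).symm
    have h1 : ((adjoint (P ∘L J)) ∘L ((1 - Q) ∘L (P ∘L J))).IsPositive :=
      hQ1.adjoint_conj (P ∘L J)
    have h2 : E - A = (adjoint (P ∘L J)) ∘L ((1 - Q) ∘L (P ∘L J)) := by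
      rw [adjoint_comp, hPadj]
      ext x
      simp only [sub_apply, hdil, hAeq, comp_apply, coe_comp', Function.comp_apply,
        sub_apply, one_apply]
      rw [← map_sub (adjoint J)]
      congr 1
      rw [map_sub, one_apply_eq_self, hPP, hPQ, hPP]
    rw [h2]
    exact h1
end

section
/- There exist a projection-valued measure A on ℝ (namely the canonical position spectral measure on L²(ℝ)) and a continuous function f : ℝ → [0,1] with supp f = ℝ (so A(supp f) = I) such that the effect E = ∫ f dA has nontrivial kernel, i.e., P_E ≠ I. -/
open MeasureTheory Metric ENNReal

/-- There is a continuous function `f : ℝ → [0,1]` with full support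
(`supp f = ℝ`, so that `Q(supp f) = I` for the canonical position spectral measure `Q` on
`L²(ℝ)`) such that the effect `E = f(Q)`, i.e. multiplication by `f` on `L²(ℝ)`, has a
nontrivial kernel; hence its support projection `P_E ≠ I`. -/
theorem stmt_9 :
    ∃ f : ℝ → ℝ, Continuous f ∧ (∀ x, f x ∈ Set.Icc (0 : ℝ) 1) ∧
      tsupport f = Set.univ ∧
      ∃ ψ : Lp ℂ 2 (volume : Measure ℝ), ψ ≠ 0 ∧
        (∀ᵐ x ∂(volume : Measure ℝ), (f x : ℂ) * ψ x = 0) := by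
  -- enumeration of a dense subset of ℝ
  set e : ℕ → ℝ := fun n => (((Denumerable.eqv ℚ).symm n : ℚ) : ℝ) with he
  have hde : DenseRange e := by
    have : Set.range e = Set.range ((↑) : ℚ → ℝ) := by
      ext x; constructor
      · rintro ⟨n, rfl⟩; exact ⟨_, rfl⟩
      · rintro ⟨q, rfl⟩; exact ⟨Denumerable.eqv ℚ q, by simp [he]⟩
    unfold DenseRange
    rw [this]
    exact Rat.denseRange_cast
  -- a small dense open set
  set U : Set ℝ := ⋃ n, ball (e n) ((1/2 : ℝ) ^ (n + 3)) with hU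
  have hUopen : IsOpen U := isOpen_iUnion fun n => isOpen_ball
  have hUdense : Dense U := by
    apply Dense.mono _ hde
    rintro x ⟨n, rfl⟩
    exact Set.mem_iUnion.2 ⟨n, mem_ball_self (by positivity)⟩
  have hUvol : volume U ≤ 1/2 := by
    calc volume U ≤ ∑' n, volume (ball (e n) ((1/2 : ℝ) ^ (n + 3))) := measure_iUnion_le _
      _ = ∑' (n : ℕ), (1/2 : ℝ≥0∞) ^ (n + 2) := by
          congr 1; ext n
          rw [Real.volume_ball,
            show (2 : ℝ) * (1/2)^(n+3) = (1/2 : ℝ)^(n+2) by ring,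
            ENNReal.ofReal_pow (by norm_num), ENNReal.ofReal_div_of_pos (by norm_num)]
          norm_num
      _ = (1/2 : ℝ≥0∞) ^ 2 * ∑' (n : ℕ), (1/2 : ℝ≥0∞) ^ n := by
          rw [← ENNReal.tsum_mul_left]; congr 1; ext n; ring
      _ = 1/2 := by
          rw [ENNReal.tsum_geometric, one_div, ENNReal.one_sub_inv_two, inv_inv, sq,
            mul_assoc, ENNReal.inv_mul_cancel (by norm_num) (by norm_num), mul_one]
  set C : Set ℝ := Uᶜ with hC
  have hCclosed : IsClosed C := hUopen.isClosed_compl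
  set S : Set ℝ := Set.Icc (0:ℝ) 1 ∩ C with hS
  have hSmeas : MeasurableSet S := measurableSet_Icc.inter hCclosed.measurableSet
  have hSvol : 1/2 ≤ volume S := by
    have h1 : volume (Set.Icc (0:ℝ) 1) - volume U ≤ volume S := by
      rw [hS, Set.inter_comm, ← Set.diff_eq_compl_inter]
      exact le_measure_diff
    refine le_trans ?_ h1
    rw [Real.volume_Icc, show ENNReal.ofReal (1 - 0) = 1 by norm_num]
    calc (1/2 : ℝ≥0∞) = 1 - 1/2 := by rw [one_div]; exact ENNReal.one_sub_inv_two.symm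
      _ ≤ 1 - volume U := tsub_le_tsub_left hUvol 1
  have hSpos : volume S ≠ 0 := by
    intro h; rw [h] at hSvol; simp at hSvol
  have hSfin : volume S ≠ ⊤ := by
    have h1 : volume S ≤ 1 := by
      calc volume S ≤ volume (Set.Icc (0:ℝ) 1) := measure_mono Set.inter_subset_left
        _ = 1 := by rw [Real.volume_Icc]; norm_num
    exact ne_top_of_le_ne_top one_ne_top h1
  have hCne : C.Nonempty := by
    rcases nonempty_of_measure_ne_zero hSpos with ⟨x, hx⟩
    exact ⟨x, hx.2⟩
  -- the function
  refine ⟨fun x => min 1 (infDist x C), continuous_const.min (continuous_infDist_pt C), ?_, ?_, ?_⟩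
  · intro x
    exact ⟨le_min zero_le_one infDist_nonneg, min_le_left _ _⟩
  · apply Set.eq_univ_of_univ_subset
    rw [← hUdense.closure_eq]
    apply closure_mono
    intro x hx
    have hxC : x ∉ C := by simpa [hC] using hx
    have hpos : 0 < infDist x C := (hCclosed.notMem_iff_infDist_pos hCne).1 hxC
    simp only [Function.mem_support]
    exact ne_of_gt (lt_min one_pos hpos)
  · refine ⟨indicatorConstLp 2 hSmeas hSfin (1 : ℂ), ?_, ?_⟩
    · intro h
      have hnorm := norm_indicatorConstLp (p := 2) (μ := (volume : Measure ℝ)) (hs := hSmeas)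
        (hμs := hSfin) (c := (1:ℂ)) (by norm_num) (by norm_num)
      rw [h, norm_zero, norm_one, one_mul] at hnorm
      have hpos : 0 < (volume S).toReal := ENNReal.toReal_pos hSpos hSfin
      have h2 := Real.rpow_pos_of_pos hpos (1 / (2:ℝ≥0∞).toReal)
      have h3 : (0:ℝ) < volume.real S ^ (1 / (2:ℝ≥0∞).toReal) := h2
      rw [← hnorm] at h3; exact lt_irrefl 0 h3
    · filter_upwards [indicatorConstLp_coeFn (μ := (volume : Measure ℝ)) (p := 2) (hs := hSmeas)
        (hμs := hSfin) (c := (1:ℂ))] with x hx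
      rw [hx]
      by_cases hxS : x ∈ S
      · have : infDist x C = 0 := infDist_zero_of_mem hxS.2
        simp [this]
      · simp [Set.indicator_of_notMem hxS]
end

section
/- Let Λ(ρ) = MρM* and Φ(ρ) = KρK* be pure operations on trace-class operators of H, where M and K are contractions, with associated effects A = M*M and E = K*K. Then A ≤ E if and only if there exists a pure operation Ψ(ρ) = CρC* (C a contraction) such that Λ = Ψ ∘ Φ. -/
set_option synthInstance.maxHeartbeats 1000000
set_option maxHeartbeats 1000000
open ContinuousLinearMap

open scoped NNReal

/-- Douglas factorization: if `‖M x‖ ≤ ‖K x‖` for all `x`, then `M = C ∘ K` for a contraction. -/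
theorem douglas {H : Type*} [NormedAddCommGroup H] [InnerProductSpace ℂ H] [CompleteSpace H]
    (M K : H →L[ℂ] H) (h : ∀ x, ‖M x‖ ≤ ‖K x‖) :
    ∃ C : H →L[ℂ] H, ‖C‖ ≤ 1 ∧ C.comp K = M := by
  classical
  set K' : H →ₗ[ℂ] H := (K : H →ₗ[ℂ] H) with hK'
  set M' : H →ₗ[ℂ] H := (M : H →ₗ[ℂ] H) with hM'
  have hker : LinearMap.ker K' ≤ LinearMap.ker M' := by
    intro x hx
    have hx' : K x = 0 := hx
    have : ‖M x‖ ≤ 0 := by simpa [hx'] using h x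
    exact norm_le_zero_iff.mp this
  set C₀lin : (LinearMap.range K') →ₗ[ℂ] H :=
    ((LinearMap.ker K').liftQ M' hker).comp K'.quotKerEquivRange.symm.toLinearMap with hC₀
  have hC₀apply : ∀ x : H, ∀ hx : K x ∈ LinearMap.range K', C₀lin ⟨K x, hx⟩ = M x := by
    intro x hx
    have h1 : K'.quotKerEquivRange.symm ⟨K' x, hx⟩ = (LinearMap.ker K').mkQ x :=
      K'.quotKerEquivRange_symm_apply_image x hx
    simp only [hC₀, LinearMap.comp_apply, LinearEquiv.coe_toLinearMap]
    rw [show (⟨K x, hx⟩ : LinearMap.range K') = ⟨K' x, hx⟩ from rfl, h1]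
    rfl
  have hC₀bound : ∀ u : LinearMap.range K', ‖C₀lin u‖ ≤ 1 * ‖(u : H)‖ := by
    rintro ⟨u, x, rfl⟩
    rw [show (⟨K' x, ⟨x, rfl⟩⟩ : LinearMap.range K') = ⟨K x, ⟨x, rfl⟩⟩ from rfl,
      hC₀apply x ⟨x, rfl⟩]
    simpa using h x
  set C₀ : (LinearMap.range K') →L[ℂ] H := C₀lin.mkContinuous 1 hC₀bound with hC₀'
  have hC₀norm : ‖C₀‖ ≤ 1 := C₀lin.mkContinuous_norm_le zero_le_one hC₀bound
  set S : Submodule ℂ H := (LinearMap.range K').topologicalClosure with hS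
  haveI : CompleteSpace S := (Submodule.isClosed_topologicalClosure _).completeSpace_coe
  set elin : (LinearMap.range K') →ₗ[ℂ] S :=
    Submodule.inclusion (Submodule.le_topologicalClosure _) with helin
  have helin_norm : ∀ u : LinearMap.range K', ‖elin u‖ = ‖u‖ := fun u => rfl
  set e : (LinearMap.range K') →L[ℂ] S :=
    elin.mkContinuous 1 (fun u => by rw [helin_norm]; simp) with he
  have h_e : ∀ u : LinearMap.range K', ‖u‖ ≤ ((1 : ℝ≥0) : ℝ) * ‖e u‖ := fun u => by
    have : ‖e u‖ = ‖u‖ := rfl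
    rw [this]; simp
  have hrange : Set.range (Subtype.val ∘ e) = ((LinearMap.range K') : Set H) := by
    have : (Subtype.val ∘ e) = (Subtype.val : (LinearMap.range K') → H) := rfl
    rw [this, Subtype.range_coe]
  have h_dense : DenseRange e := by
    intro y
    rw [closure_subtype]
    have : Subtype.val '' Set.range e = Set.range (Subtype.val ∘ e) := by
      rw [Set.range_comp]
    rw [this, hrange]
    exact y.2
  set Chat : S →L[ℂ] H :=
    C₀.extend e with hChat
  have hChatnorm : ‖Chat‖ ≤ 1 := by
    have := C₀.opNorm_extend_le h_dense h_e
    calc ‖Chat‖ ≤ (1 : ℝ≥0) * ‖C₀‖ := this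
    _ ≤ 1 := by simpa using hC₀norm
  set C : H →L[ℂ] H := Chat.comp S.orthogonalProjectionOnto with hCdef
  refine ⟨C, ?_, ?_⟩
  · calc ‖C‖ ≤ ‖Chat‖ * ‖(S.orthogonalProjectionOnto : H →L[ℂ] S)‖ := opNorm_comp_le _ _
    _ ≤ 1 * 1 := by
        exact mul_le_mul hChatnorm (Submodule.orthogonalProjectionOnto_norm_le S) (norm_nonneg S.orthogonalProjectionOnto) zero_le_one
    _ = 1 := one_mul 1
  · ext x
    have hmemS : K x ∈ S := Submodule.le_topologicalClosure _ ⟨x, rfl⟩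
    have hproj : S.orthogonalProjectionOnto (K x) = ⟨K x, hmemS⟩ :=
      Submodule.orthogonalProjectionOnto_mem_subspace_eq_self (⟨K x, hmemS⟩ : S)
    have hiso : e ⟨K x, ⟨x, rfl⟩⟩ = ⟨K x, hmemS⟩ := rfl
    have hext : Chat ⟨K x, hmemS⟩ = C₀ ⟨K x, ⟨x, rfl⟩⟩ := by
      rw [← hiso]
      exact ContinuousLinearMap.extend_eq _ h_dense (isUniformEmbedding_of_bound _ h_e).isUniformInducing _
    have : C₀ ⟨K x, ⟨x, rfl⟩⟩ = M x := hC₀apply x ⟨x, rfl⟩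
    simp only [hCdef, comp_apply, hproj, hext, this]

/-- Let `Λ(ρ) = MρM*` and `Φ(ρ) = KρK*` be pure operations (with `M`, `K`
contractions) defining the effects `A = M*M` and `E = K*K`. Then `A ≤ E` iff there is a pure
operation `Ψ(ρ) = CρC*` (with `C` a contraction) such that `Λ = Ψ ∘ Φ`. -/
theorem stmt_10 {H : Type*} [NormedAddCommGroup H] [InnerProductSpace ℂ H] [CompleteSpace H]
    (M K : H →L[ℂ] H) (hM : ‖M‖ ≤ 1) (hK : ‖K‖ ≤ 1) :
    (((adjoint K).comp K - (adjoint M).comp M).IsPositive ↔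
      ∃ C : H →L[ℂ] H, ‖C‖ ≤ 1 ∧
        ∀ ρ : H →L[ℂ] H,
          (M.comp ρ).comp (adjoint M) =
            C.comp (((K.comp ρ).comp (adjoint K)).comp (adjoint C))) := by
  constructor
  · intro hpos
    have hn : ∀ x, ‖M x‖ ≤ ‖K x‖ := by
      intro x
      have h0 := hpos.2 x
      have h1 : ContinuousLinearMap.reApplyInnerSelf
          ((adjoint K).comp K - (adjoint M).comp M) x
          = ‖K x‖ ^ 2 - ‖M x‖ ^ 2 := by
        rw [ContinuousLinearMap.reApplyInnerSelf]
        rw [sub_apply, comp_apply, comp_apply, inner_sub_left, map_sub,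
          adjoint_inner_left, adjoint_inner_left, inner_self_eq_norm_sq,
          inner_self_eq_norm_sq]
      rw [h1] at h0
      nlinarith [norm_nonneg (M x), norm_nonneg (K x)]
    obtain ⟨C, hC1, hC2⟩ := douglas M K hn
    refine ⟨C, hC1, fun ρ => ?_⟩
    rw [← hC2, adjoint_comp]
    ext x
    simp only [comp_apply]
  · rintro ⟨C, hC, hρ⟩
    have hn : ∀ x, ‖M x‖ ≤ ‖K x‖ := by
      intro x
      set ρ : H →L[ℂ] H := (innerSL ℂ x).smulRight x with hρdef
      have h1 := congrFun (congrArg (DFunLike.coe) (hρ ρ)) (M x)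
      simp only [comp_apply, hρdef, smulRight_apply, innerSL_apply_apply, map_smul] at h1
      rw [adjoint_inner_right, adjoint_inner_right, adjoint_inner_right] at h1
      -- h1 : ⟪M x, M x⟫ • M x = ⟪C (K x), M x⟫ • C (K x)
      have h2 := congrArg norm h1
      rw [norm_smul, norm_smul, inner_self_eq_norm_sq_to_K] at h2
      rw [norm_pow, RCLike.norm_ofReal, abs_norm] at h2
      have h4 : ‖(inner ℂ (C (K x)) (M x) : ℂ)‖ ≤ ‖C (K x)‖ * ‖M x‖ := norm_inner_le_norm _ _
      have h5 : ‖C (K x)‖ ≤ ‖K x‖ := by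
        calc ‖C (K x)‖ ≤ ‖C‖ * ‖K x‖ := le_opNorm _ _
        _ ≤ 1 * ‖K x‖ := by gcongr
        _ = ‖K x‖ := one_mul _
      rcases eq_or_lt_of_le (norm_nonneg (M x)) with h6 | h6
      · rw [← h6]; exact norm_nonneg _
      · have h7 : ‖M x‖ ^ 2 * ‖M x‖ ≤ (‖K x‖ * ‖M x‖) * ‖K x‖ := by
          calc ‖M x‖ ^ 2 * ‖M x‖ = ‖(inner ℂ (C (K x)) (M x) : ℂ)‖ * ‖C (K x)‖ := h2
          _ ≤ (‖C (K x)‖ * ‖M x‖) * ‖K x‖ :=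
              mul_le_mul h4 h5 (norm_nonneg _) (mul_nonneg (norm_nonneg _) (norm_nonneg _))
          _ ≤ (‖K x‖ * ‖M x‖) * ‖K x‖ := by
              have := mul_le_mul_of_nonneg_right
                (mul_le_mul_of_nonneg_right h5 (norm_nonneg (M x))) (norm_nonneg (K x))
              exact this
        have h8 : ‖M x‖ ^ 2 ≤ ‖K x‖ ^ 2 :=
          le_of_mul_le_mul_right (by nlinarith) h6
        exact (pow_le_pow_iff_left₀ (norm_nonneg _) (norm_nonneg _) two_ne_zero).mp h8
    constructor
    · have h1 : IsSelfAdjoint ((adjoint K).comp K) := by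
        rw [ContinuousLinearMap.isSelfAdjoint_iff', adjoint_comp, adjoint_adjoint]
      have h2 : IsSelfAdjoint ((adjoint M).comp M) := by
        rw [ContinuousLinearMap.isSelfAdjoint_iff', adjoint_comp, adjoint_adjoint]
      exact ContinuousLinearMap.isSelfAdjoint_iff_isSymmetric.mp (h1.sub h2)
    · intro x
      have h1 : ContinuousLinearMap.reApplyInnerSelf
          ((adjoint K).comp K - (adjoint M).comp M) x
          = ‖K x‖ ^ 2 - ‖M x‖ ^ 2 := by
        rw [ContinuousLinearMap.reApplyInnerSelf]
        rw [sub_apply, comp_apply, comp_apply, inner_sub_left, map_sub,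
          adjoint_inner_left, adjoint_inner_left, inner_self_eq_norm_sq,
          inner_self_eq_norm_sq]
      rw [h1]
      have := hn x
      nlinarith [norm_nonneg (M x), norm_nonneg (K x)]
end

section
/- Let E = f(A) and F = g(B) where A, B are selfadjoint operators with spectral measures 𝖠, 𝖡 and f, g : ℝ → [0,1] are Borel measurable. If the ranges of the projections 𝖠(supp f) and 𝖡(supp g) intersect only in {0}, then the only effect A₀ with A₀ ≤ E and A₀ ≤ F is A₀ = 0. -/
set_option synthInstance.maxHeartbeats 1000000

open ContinuousLinearMap MeasureTheory

section Aux

variable {H : Type*} [NormedAddCommGroup H] [InnerProductSpace ℂ H] [CompleteSpace H]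

/-- If `T` is positive and `re ⟪φ, T φ⟫ = 0`, then `T φ = 0`. -/
lemma aux_pos_apply_eq_zero (T : H →L[ℂ] H) (hT : T.IsPositive) (φ : H)
    (h : (inner ℂ φ (T φ) : ℂ).re = 0) : T φ = 0 := by
  have hsym : (T : H →ₗ[ℂ] H).IsSymmetric :=
    ContinuousLinearMap.isSelfAdjoint_iff_isSymmetric.mp hT.isSelfAdjoint
  letI c : PreInnerProductSpace.Core ℂ H :=
  { inner := fun x y => (inner ℂ x (T y) : ℂ)
    conj_inner_symm := fun x y => by
      show (starRingEnd ℂ) (inner ℂ y (T x)) = inner ℂ x (T y)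
      rw [inner_conj_symm]
      exact hsym.apply_clm x y
    re_inner_nonneg := fun x => (Complex.nonneg_iff.mp (hT.inner_nonneg_right x)).1
    add_left := fun x y z => by simp [inner_add_left]
    smul_left := fun x y r => by simp [inner_smul_left, mul_comm] }
  have key : ‖(inner ℂ (T φ) (T φ) : ℂ)‖ * ‖(inner ℂ φ (T (T φ)) : ℂ)‖ ≤
      (inner ℂ (T φ) (T (T φ)) : ℂ).re * (inner ℂ φ (T φ) : ℂ).re :=
    @InnerProductSpace.Core.inner_mul_inner_self_le ℂ H _ _ _ c (T φ) φ
  rw [h, mul_zero] at key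
  have e2 : (inner ℂ φ (T (T φ)) : ℂ) = (inner ℂ (T φ) (T φ) : ℂ) := (hsym.apply_clm φ (T φ)).symm
  rw [e2] at key
  have e3 : ‖(inner ℂ (T φ) (T φ) : ℂ)‖ = ‖T φ‖ * ‖T φ‖ := by
    rw [@inner_self_eq_norm_sq_to_K ℂ]
    simp [sq, Complex.norm_real]
  rw [e3] at key
  have h4 : ‖T φ‖ * ‖T φ‖ = 0 :=
    mul_self_eq_zero.mp (le_antisymm key (mul_self_nonneg _))
  simpa using mul_self_eq_zero.mp h4

/-- A positive operator dominated (in the quadratic form sense) by a selfadjoint idempotent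
has its range inside the range of the idempotent. -/
lemma aux_range (P T : H →L[ℂ] H) (hPsa : IsSelfAdjoint P) (hPidem : IsIdempotentElem P)
    (hTpos : T.IsPositive)
    (hle : ∀ φ : H, (inner ℂ φ (T φ) : ℂ).re ≤ (inner ℂ φ (P φ) : ℂ).re) :
    ∀ ψ : H, T ψ ∈ Set.range ⇑P := by
  have hPsym : (P : H →ₗ[ℂ] H).IsSymmetric :=
    ContinuousLinearMap.isSelfAdjoint_iff_isSymmetric.mp hPsa
  have hTsym : (T : H →ₗ[ℂ] H).IsSymmetric :=
    ContinuousLinearMap.isSelfAdjoint_iff_isSymmetric.mp hTpos.isSelfAdjoint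
  have hker : ∀ k : H, P k = 0 → T k = 0 := by
    intro k hk
    refine aux_pos_apply_eq_zero T hTpos k (le_antisymm ?_ ?_)
    · have := hle k
      simpa [hk] using this
    · exact (Complex.nonneg_iff.mp (hTpos.inner_nonneg_right k)).1
  intro ψ
  set v := T ψ - P (T ψ) with hv_def
  have hPv : P v = 0 := by
    have h2 : P (P (T ψ)) = P (T ψ) := by
      have := DFunLike.congr_fun hPidem (T ψ)
      simpa [ContinuousLinearMap.mul_apply] using this
    simp [hv_def, map_sub, h2]
  have h1 : (inner ℂ (T ψ) v : ℂ) = 0 := by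
    rw [hTsym.apply_clm ψ v, hker v hPv, inner_zero_right]
  have h2 : (inner ℂ (P (T ψ)) v : ℂ) = 0 := by
    rw [hPsym.apply_clm (T ψ) v, hPv, inner_zero_right]
  have hv : v = 0 := by
    have hvv : (inner ℂ v v : ℂ) = 0 := by
      rw [hv_def, inner_sub_left, h1, h2, sub_zero]
    exact inner_self_eq_zero.mp hvv
  exact ⟨T ψ, (sub_eq_zero.mp hv).symm⟩

end Aux

/-- Let `E = f(A)` and `F = g(B)` for spectral measures `𝖠, 𝖡` (encoded by
their projection values and associated scalar measures) and Borel `f, g : ℝ → [0,1]`. If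
`ran 𝖠(supp f) ∩ ran 𝖡(supp g) = {0}`, then the only effect below both `E` and `F` is `0`. -/
theorem stmt_12 {H : Type*} [NormedAddCommGroup H] [InnerProductSpace ℂ H] [CompleteSpace H]
    (A B : Set ℝ → (H →L[ℂ] H))
    (hAproj : ∀ X, MeasurableSet X → IsSelfAdjoint (A X) ∧ IsIdempotentElem (A X))
    (hBproj : ∀ X, MeasurableSet X → IsSelfAdjoint (B X) ∧ IsIdempotentElem (B X))
    (hAempty : A ∅ = 0) (hAuniv : A Set.univ = 1)
    (hBempty : B ∅ = 0) (hBuniv : B Set.univ = 1)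
    (hAmul : ∀ X Y, MeasurableSet X → MeasurableSet Y → A (X ∩ Y) = (A X).comp (A Y))
    (hBmul : ∀ X Y, MeasurableSet X → MeasurableSet Y → B (X ∩ Y) = (B X).comp (B Y))
    (μ ν : H → Measure ℝ) (hμfin : ∀ φ, IsFiniteMeasure (μ φ)) (hνfin : ∀ φ, IsFiniteMeasure (ν φ))
    (hμ : ∀ (φ : H) (X : Set ℝ), MeasurableSet X →
      ((μ φ) X).toReal = (inner ℂ φ (A X φ) : ℂ).re)
    (hν : ∀ (φ : H) (X : Set ℝ), MeasurableSet X →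
      ((ν φ) X).toReal = (inner ℂ φ (B X φ) : ℂ).re)
    (f g : ℝ → ℝ) (hf : Measurable f) (hg : Measurable g)
    (hf01 : ∀ x, f x ∈ Set.Icc (0 : ℝ) 1) (hg01 : ∀ x, g x ∈ Set.Icc (0 : ℝ) 1)
    (E F : H →L[ℂ] H) (hEsa : IsSelfAdjoint E) (hFsa : IsSelfAdjoint F)
    (hE : ∀ φ : H, (inner ℂ φ (E φ) : ℂ).re = ∫ x, f x ∂(μ φ))
    (hF : ∀ φ : H, (inner ℂ φ (F φ) : ℂ).re = ∫ x, g x ∂(ν φ))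
    (hdisj : ∀ φ : H, φ ∈ Set.range ⇑(A (tsupport f)) → φ ∈ Set.range ⇑(B (tsupport g)) →
      φ = 0) :
    ∀ A₀ : H →L[ℂ] H, A₀.IsPositive → (1 - A₀).IsPositive →
      (E - A₀).IsPositive → (F - A₀).IsPositive → A₀ = 0 := by
  intro A₀ hpos _ hEA hFA
  have key : ∀ (C : Set ℝ → (H →L[ℂ] H)) (m : H → Measure ℝ), (∀ φ, IsFiniteMeasure (m φ)) →
      ∀ (h : ℝ → ℝ), Measurable h → (∀ x, h x ∈ Set.Icc (0 : ℝ) 1) →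
      ∀ (G : H →L[ℂ] H),
      (∀ (φ : H) (X : Set ℝ), MeasurableSet X → ((m φ) X).toReal = (inner ℂ φ (C X φ) : ℂ).re) →
      (∀ φ : H, (inner ℂ φ (G φ) : ℂ).re = ∫ x, h x ∂(m φ)) →
      (G - A₀).IsPositive →
      ∀ φ : H, (inner ℂ φ (A₀ φ) : ℂ).re ≤ (inner ℂ φ (C (tsupport h) φ) : ℂ).re := by
    intro C m hmfin h hh hh01 G hm hG hGA φ
    haveI := hmfin φ
    have hS : MeasurableSet (tsupport h) := (isClosed_tsupport h).measurableSet
    have step1 : (inner ℂ φ (A₀ φ) : ℂ).re ≤ (inner ℂ φ (G φ) : ℂ).re := by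
      have h0 := hGA.inner_nonneg_right φ
      simp only [ContinuousLinearMap.sub_apply, inner_sub_right, map_sub,
        RCLike.re_to_complex, Complex.sub_re] at h0
      have h1 := (Complex.nonneg_iff.mp h0).1
      rw [Complex.sub_re] at h1
      linarith
    have hint : Integrable h (m φ) :=
      (integrable_const (1 : ℝ)).mono' hh.aestronglyMeasurable
        (ae_of_all _ fun x => by
          rw [Real.norm_eq_abs, abs_of_nonneg (hh01 x).1]; exact (hh01 x).2)
    have step2 : ∫ x, h x ∂(m φ) ≤ ((m φ) (tsupport h)).toReal := by
      calc ∫ x, h x ∂(m φ)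
          ≤ ∫ x, (tsupport h).indicator (fun _ => (1 : ℝ)) x ∂(m φ) := by
            refine integral_mono hint ((integrable_const 1).indicator hS) fun x => ?_
            by_cases hx : x ∈ tsupport h
            · rw [Set.indicator_of_mem hx]; exact (hh01 x).2
            · rw [Set.indicator_of_notMem hx, image_eq_zero_of_notMem_tsupport hx]
        _ = ((m φ) (tsupport h)).toReal := by
            rw [integral_indicator_const _ hS]; simp; rfl
    calc (inner ℂ φ (A₀ φ) : ℂ).re ≤ (inner ℂ φ (G φ) : ℂ).re := step1
      _ = ∫ x, h x ∂(m φ) := hG φ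
      _ ≤ ((m φ) (tsupport h)).toReal := step2
      _ = (inner ℂ φ (C (tsupport h) φ) : ℂ).re := hm φ _ hS
  have hSf : MeasurableSet (tsupport f) := (isClosed_tsupport f).measurableSet
  have hSg : MeasurableSet (tsupport g) := (isClosed_tsupport g).measurableSet
  have hranP : ∀ ψ : H, A₀ ψ ∈ Set.range ⇑(A (tsupport f)) :=
    aux_range _ _ (hAproj _ hSf).1 (hAproj _ hSf).2 hpos
      (key A μ hμfin f hf hf01 E hμ hE hEA)
  have hranQ : ∀ ψ : H, A₀ ψ ∈ Set.range ⇑(B (tsupport g)) :=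
    aux_range _ _ (hBproj _ hSg).1 (hBproj _ hSg).2 hpos
      (key B ν hνfin g hg hg01 F hν hF hFA)
  ext ψ
  exact hdisj (A₀ ψ) (hranP ψ) (hranQ ψ)
end

section
/- Let Q and A be binary observables with outcomes {0,1}, given by effects Q(1), A(1) with A(1) ≠ 0. Then the following are equivalent: (i) A(1) ≤ Q(1); (ii) the pairs {Q(1),I−Q(1)} and {A(1),I−A(1)} admit a joint observable G : {0,1}×{0,1} → effects (four effects summing to I with correct margins) such that tr[G(1,1)ρ] = tr[A(1)ρ] for every state ρ (i.e., outcome 1 of A guarantees outcome 1 of Q). -/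
set_option synthInstance.maxHeartbeats 1000000

open ContinuousLinearMap

/-- For binary observables given by effects `Q1` (for `Q`) and `A1 ≠ 0`
(for `A`), the following are equivalent: (i) `A1 ≤ Q1`; (ii) there is a joint observable
`G : {0,1}×{0,1} → effects` of the two binary observables such that the outcome `1` of `A`
guarantees the outcome `1` of `Q`, i.e. `tr[G(1,1)ρ] = tr[A1 ρ]` in every (pure) state. -/
theorem stmt_13 {H : Type*} [NormedAddCommGroup H] [InnerProductSpace ℂ H] [CompleteSpace H]
    (Q1 A1 : H →L[ℂ] H)
    (hQ : Q1.IsPositive) (hQ1 : (1 - Q1).IsPositive)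
    (hA : A1.IsPositive) (hA1 : (1 - A1).IsPositive) (hA0 : A1 ≠ 0) :
    (Q1 - A1).IsPositive ↔
      ∃ G : Bool → Bool → (H →L[ℂ] H),
        (∀ i j, (G i j).IsPositive ∧ (1 - G i j).IsPositive) ∧
        G false false + G false true + G true false + G true true = 1 ∧
        G true false + G true true = Q1 ∧
        G false true + G true true = A1 ∧
        ∀ ψ : H, (inner ℂ ψ (G true true ψ) : ℂ) = inner ℂ ψ (A1 ψ) := by
  constructor
  · intro h
    refine ⟨fun i j => match i, j with
      | false, false => 1 - Q1
      | false, true => 0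
      | true, false => Q1 - A1
      | true, true => A1, ?_, ?_, ?_, ?_, ?_⟩
    · rintro (_|_) (_|_)
      · exact ⟨hQ1, by simpa using hQ⟩
      · exact ⟨isPositive_zero, by simpa using isPositive_one⟩
      · refine ⟨h, ?_⟩
        have : (1 : H →L[ℂ] H) - (Q1 - A1) = (1 - Q1) + A1 := by abel
        rw [this]; exact hQ1.add hA
      · exact ⟨hA, hA1⟩
    · module
    · module
    · simp
    · intro ψ; rfl
  · rintro ⟨G, hpos, _, hQm, hAm, hinner⟩
    have hGA : G true true = A1 := by
      have := (inner_map_self_eq_zero ((G true true - A1 : H →L[ℂ] H) : H →ₗ[ℂ] H)).mp ?_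
      · have : (G true true - A1 : H →L[ℂ] H) = 0 := by
          ext x
          exact congrFun (congrArg DFunLike.coe this) x
        linear_combination (norm := module) this
      · intro x
        have h1 := hinner x
        simp only [ContinuousLinearMap.coe_coe, ContinuousLinearMap.sub_apply]
        rw [inner_sub_left, ← inner_conj_symm ((G true true) x) x,
          ← inner_conj_symm (A1 x) x, h1, sub_self]
    have : Q1 - A1 = G true false := by
      rw [← hQm, hGA]; abel
    rw [this]
    exact (hpos true false).1
end

section
/- Let φ ∈ L²(ℝ) be such that its Fourier transform is supported in [−R, R] for some R > 0, and suppose φ(nπ/R) = 0 for every integer n (φ is continuous as the inverse Fourier transform of an L¹ function). Then φ = 0. -/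
open MeasureTheory

/-- uniqueness in the Shannon sampling theorem. Let `φ ∈ L²(ℝ)` be
band-limited: `φ` is the inverse Fourier transform of a (square-)integrable function `g`
supported in `[-R, R]`. If `φ(nπ/R) = 0` for every integer `n`, then `φ = 0`. -/
theorem stmt_19 (R : ℝ) (hR : 0 < R) (g : ℝ → ℂ)
    (hgsupp : ∀ p : ℝ, p ∉ Set.Icc (-R) R → g p = 0)
    (hgint : Integrable g (volume : Measure ℝ))
    (hgL2 : MemLp g 2 (volume : Measure ℝ))
    (φ : ℝ → ℂ)
    (hφ : ∀ x : ℝ, φ x = ∫ p : ℝ, g p * Complex.exp (Complex.I * (x : ℂ) * (p : ℂ)))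
    (hsamples : ∀ n : ℤ, φ ((n : ℝ) * Real.pi / R) = 0) :
    ∀ x : ℝ, φ x = 0 := by
  haveI hT : Fact (0 < 2 * R) := ⟨by linarith⟩
  -- measurable representative of `g`
  set g₁ : ℝ → ℂ := hgL2.1.mk g with hg₁def
  have hg₁sm : StronglyMeasurable g₁ := hgL2.1.stronglyMeasurable_mk
  have hae : g =ᵐ[volume] g₁ := hgL2.1.ae_eq_mk
  -- the periodization on the additive circle of circumference 2R
  set G : AddCircle (2 * R) → ℂ := AddCircle.liftIoc (2 * R) (-R) g₁ with hGdef
  have hGsm : StronglyMeasurable G :=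
    (hg₁sm.comp_measurable measurable_subtype_coe).comp_measurable
      (AddCircle.measurableEquivIoc (2 * R) (-R)).measurable
  have mp := AddCircle.measurePreserving_mk (T := 2 * R) (-R)
  have hb : -R + 2 * R = R := by ring
  have hcomp : (fun t : ℝ => G (t : AddCircle (2 * R)))
      =ᵐ[volume.restrict (Set.Ioc (-R) (-R + 2 * R))] g₁ := by
    filter_upwards [ae_restrict_mem measurableSet_Ioc] with t ht
    exact AddCircle.liftIoc_coe_apply ht
  -- `G` is in L² for the (normalized) Haar measure
  have hGvol : MemLp G 2 (volume : Measure (AddCircle (2 * R))) := by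
    rw [← mp.map_eq]
    refine (memLp_map_measure_iff hGsm.aestronglyMeasurable
      AddCircle.measurable_mk'.aemeasurable).mpr ?_
    exact ((hgL2.ae_eq hae).restrict _).ae_eq hcomp.symm
  have hhaar : (AddCircle.haarAddCircle : Measure (AddCircle (2 * R)))
      = (ENNReal.ofReal (2 * R))⁻¹ • (volume : Measure (AddCircle (2 * R))) := by
    rw [AddCircle.volume_eq_smul_haarAddCircle, smul_smul, ENNReal.inv_mul_cancel, one_smul]
    · exact ne_of_gt (ENNReal.ofReal_pos.2 (by linarith))
    · exact ENNReal.ofReal_ne_top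
  have hGhaar : MemLp G 2 (AddCircle.haarAddCircle : Measure (AddCircle (2 * R))) := by
    rw [hhaar]
    exact hGvol.smul_measure (by simp [hR])
  -- all Fourier coefficients of `G` vanish
  have hGcoeff : ∀ n : ℤ, fourierCoeff G n = 0 := by
    intro n
    rw [fourierCoeff_eq_intervalIntegral G n (-R)]
    have hI : (∫ x in (-R)..(-R + 2 * R),
        fourier (-n) (x : AddCircle (2 * R)) • G (x : AddCircle (2 * R))) = 0 := by
      rw [intervalIntegral.integral_of_le (by linarith : (-R : ℝ) ≤ -R + 2 * R)]
      have hcongr : (fun x : ℝ => fourier (-n) (x : AddCircle (2 * R)) • G (x : AddCircle (2 * R)))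
          =ᵐ[volume.restrict (Set.Ioc (-R) (-R + 2 * R))]
          (fun p : ℝ => g p * Complex.exp
            (Complex.I * (((-n : ℤ) : ℝ) * Real.pi / R : ℝ) * (p : ℂ))) := by
        filter_upwards [hcomp, ae_restrict_of_ae hae.symm] with t hGt hgt
        rw [hGt, hgt, fourier_coe_apply, smul_eq_mul, mul_comm]
        congr 1
        push_cast
        field_simp
      rw [integral_congr_ae hcongr]
      have hout : ∀ p : ℝ, p ∉ Set.Icc (-R) R →
          g p * Complex.exp (Complex.I * (((-n : ℤ) : ℝ) * Real.pi / R : ℝ) * (p : ℂ)) = 0 := by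
        intro p hp; rw [hgsupp p hp, zero_mul]
      have h1 : (∫ p in Set.Ioc (-R) (-R + 2 * R),
            g p * Complex.exp (Complex.I * (((-n : ℤ) : ℝ) * Real.pi / R : ℝ) * (p : ℂ)))
          = ∫ p in Set.Icc (-R) R,
            g p * Complex.exp (Complex.I * (((-n : ℤ) : ℝ) * Real.pi / R : ℝ) * (p : ℂ)) := by
        rw [hb, integral_Icc_eq_integral_Ioc]
      rw [h1, setIntegral_eq_integral_of_forall_compl_eq_zero hout]
      have := hsamples (-n)
      rw [hφ] at this
      simpa using this
    rw [hI, smul_zero]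
  -- hence `G = 0` a.e.
  set F : Lp ℂ 2 (AddCircle.haarAddCircle : Measure (AddCircle (2 * R))) := hGhaar.toLp G with hF
  have hFG : (F : AddCircle (2 * R) → ℂ) =ᵐ[AddCircle.haarAddCircle] G := hGhaar.coeFn_toLp
  have hFcoeff : ∀ n : ℤ, fourierCoeff (F : AddCircle (2 * R) → ℂ) n = 0 := by
    intro n
    rw [← hGcoeff n]
    unfold fourierCoeff
    refine integral_congr_ae ?_
    filter_upwards [hFG] with t ht
    rw [ht]
  have hF0 : F = 0 := by
    have hrepr : fourierBasis.repr F = 0 := by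
      ext n
      rw [fourierBasis_repr]
      simpa using hFcoeff n
    have := fourierBasis.repr.map_eq_zero_iff.mp (by simpa using hrepr)
    exact this
  have hGa0 : G =ᵐ[(AddCircle.haarAddCircle : Measure (AddCircle (2 * R)))] 0 := by
    refine hFG.symm.trans ?_
    rw [hF0]
    exact Lp.coeFn_zero _ _ _
  have hGv0 : G =ᵐ[(volume : Measure (AddCircle (2 * R)))] 0 := by
    rw [AddCircle.volume_eq_smul_haarAddCircle]
    exact Measure.ae_smul_measure hGa0 _
  -- pull back: `g = 0` a.e. on `(-R, R]`, hence a.e. on `ℝ`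
  have hg₁0 : g₁ =ᵐ[volume.restrict (Set.Ioc (-R) (-R + 2 * R))] 0 := by
    have h2 : (fun t : ℝ => G (t : AddCircle (2 * R)))
        =ᵐ[volume.restrict (Set.Ioc (-R) (-R + 2 * R))] (fun _ => 0) := by
      rw [← mp.map_eq] at hGv0
      exact ae_eq_comp AddCircle.measurable_mk'.aemeasurable hGv0
    exact hcomp.symm.trans h2
  have hg0 : g =ᵐ[volume] 0 := by
    have h3 : ∀ᵐ t ∂(volume : Measure ℝ), t ∈ Set.Ioc (-R) (-R + 2 * R) → g t = 0 :=
      ae_imp_of_ae_restrict (Filter.EventuallyEq.trans (ae_restrict_of_ae hae) hg₁0)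
    have h4 : ∀ᵐ t ∂(volume : Measure ℝ), t ∉ ({-R} : Set ℝ) :=
      measure_eq_zero_iff_ae_notMem.1 (measure_singleton _)
    filter_upwards [h3, h4] with t h3t h4t
    by_cases ht : t ∈ Set.Ioc (-R) (-R + 2 * R)
    · exact h3t ht
    · refine hgsupp t fun hmem => ?_
      rw [Set.mem_Icc] at hmem
      rw [Set.mem_Ioc] at ht
      push_neg at ht
      have h5 : t ≤ -R := by
        by_contra h6
        push_neg at h6
        have := ht h6
        linarith [hmem.2]
      have : t = -R := le_antisymm h5 hmem.1
      exact h4t (by simpa [Set.mem_singleton_iff] using this)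
  intro x
  rw [hφ x]
  refine integral_eq_zero_of_ae ?_
  filter_upwards [hg0] with p hp
  simp [hp]
end
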